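/- Let F be a face of a smooth lattice polytope P ⊆ ℝ^n with central normal u_F and supporting value b = max_{x∈P} u_F·x, and let ε > 0. Then every vertex v of P not in F satisfies u_F·v < b − ε (so that the blow-up P_{F,ε} = P ∩ {x : u_F·x ≤ b − ε} of size ε can be performed) if and only if every edge of P with exactly one endpoint in F has lattice length strictly greater than ε. -/

import Mathlib

open Finset

/-- Real dot product of an integer vector with a real vector. -/
def dotZ {n : ℕ} (u : Fin n → ℤ) (x : Fin n → ℝ) : ℝ := ∑ i, (u i : ℝ) * x i

/-- Real dot product. -/
def dotR {n : ℕ} (u x : Fin n → ℝ) : ℝ := ∑ i, u i * x i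

/-- A point of `ℝ^n` is a lattice point if all its coordinates are integers. -/
def IsLatticePt {n : ℕ} (x : Fin n → ℝ) : Prop := ∀ i, ∃ m : ℤ, x i = (m : ℝ)

/-- A (full-dimensional) lattice polytope: the convex hull of a finite set of
lattice points whose affine span is all of `ℝ^n`. -/
def IsLatticePolytope {n : ℕ} (P : Set (Fin n → ℝ)) : Prop :=
  ∃ V : Finset (Fin n → ℝ), (∀ v ∈ V, IsLatticePt v) ∧
    P = convexHull ℝ (V : Set (Fin n → ℝ)) ∧ affineSpan ℝ P = ⊤

/-- `F` is an (exposed) face of `P`: the set of maximizers over `P` of some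
linear functional. -/
def IsFaceOf {n : ℕ} (P F : Set (Fin n → ℝ)) : Prop :=
  ∃ u : Fin n → ℝ, F = {x ∈ P | ∀ y ∈ P, dotR u y ≤ dotR u x}

/-- The dimension of a subset of `ℝ^n` (dimension of its affine hull). -/
noncomputable def dimSet {n : ℕ} (F : Set (Fin n → ℝ)) : ℕ :=
  Module.finrank ℝ (vectorSpan ℝ F)

/-- A facet of `P`: a nonempty face of dimension `n - 1`. -/
def IsFacetOf {n : ℕ} (P F : Set (Fin n → ℝ)) : Prop :=
  IsFaceOf P F ∧ F.Nonempty ∧ dimSet F + 1 = n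

/-- A vertex of `P`: a point such that `{v}` is a face. -/
def IsVertexOf {n : ℕ} (P : Set (Fin n → ℝ)) (v : Fin n → ℝ) : Prop :=
  IsFaceOf P {v}

/-- An edge of `P`: a face which is a nondegenerate segment. -/
def IsEdgeOf {n : ℕ} (P E : Set (Fin n → ℝ)) : Prop :=
  IsFaceOf P E ∧ ∃ a b : Fin n → ℝ, a ≠ b ∧ E = segment ℝ a b

/-- An integer vector is primitive if the gcd of its coordinates is 1. -/
def IsPrimitiveZ {n : ℕ} (u : Fin n → ℤ) : Prop := Finset.univ.gcd u = 1

/-- `u` is the primitive outer normal of the facet `F` of `P`. -/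
def IsFacetNormal {n : ℕ} (P F : Set (Fin n → ℝ)) (u : Fin n → ℤ) : Prop :=
  IsPrimitiveZ u ∧ IsFacetOf P F ∧
    F = {x ∈ P | ∀ y ∈ P, dotZ u y ≤ dotZ u x}

/-- `u` is the central normal vector of the face `G` of `P`: the sum of the
primitive outer normals of all the facets of `P` containing `G`. -/
def IsCentralNormal {n : ℕ} (P G : Set (Fin n → ℝ)) (u : Fin n → ℤ) : Prop :=
  ∃ (m : ℕ) (Fs : Fin m → Set (Fin n → ℝ)) (us : Fin m → Fin n → ℤ),
    Function.Injective Fs ∧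
    (∀ i, G ⊆ Fs i ∧ IsFacetNormal P (Fs i) (us i)) ∧
    (∀ F, IsFacetOf P F → G ⊆ F → ∃ i, F = Fs i) ∧
    u = ∑ i, us i

/-- The lattice length of the segment from `a` to `b`. -/
def LatticeLength {n : ℕ} (a b : Fin n → ℝ) (ℓ : ℕ) : Prop :=
  ∃ d : Fin n → ℤ, IsPrimitiveZ d ∧ ∀ i, b i - a i = (ℓ : ℝ) * (d i : ℝ)

/-- `d` is the primitive integer direction vector of the edge `E` at its
endpoint `v`, pointing away from `v`. -/
def EdgeDirAt {n : ℕ} (v : Fin n → ℝ) (E : Set (Fin n → ℝ)) (d : Fin n → ℤ) : Prop :=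
  IsPrimitiveZ d ∧ ∃ w ∈ E, ∃ t : ℝ, 0 < t ∧ ∀ i, w i - v i = t * (d i : ℝ)

/-- A polytope is smooth (Delzant) if every vertex lies in exactly `n` facets
and the primitive direction vectors of the `n` edges incident to each vertex
form a basis of the lattice `ℤ^n`. -/
def IsSmoothPolytope {n : ℕ} (P : Set (Fin n → ℝ)) : Prop :=
  ∀ v : Fin n → ℝ, IsVertexOf P v →
    (∃ Fs : Fin n → Set (Fin n → ℝ), Function.Injective Fs ∧
      (∀ i, IsFacetOf P (Fs i) ∧ v ∈ Fs i) ∧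
      (∀ F, IsFacetOf P F → v ∈ F → ∃ i, F = Fs i)) ∧
    (∃ (E : Fin n → Set (Fin n → ℝ)) (d : Fin n → Fin n → ℤ),
      Function.Injective E ∧
      (∀ i, IsEdgeOf P (E i) ∧ v ∈ E i ∧ EdgeDirAt v (E i) (d i)) ∧
      (∀ E', IsEdgeOf P E' → v ∈ E' → ∃ i, E' = E i) ∧
      IsUnit (Matrix.det (Matrix.of d)))

/-- A polytope is reflexive if the origin is in its interior and every facet is
supported at value `1` by its primitive outer normal. -/
def IsReflexivePolytope {n : ℕ} (P : Set (Fin n → ℝ)) : Prop :=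
  (0 : Fin n → ℝ) ∈ interior P ∧
  ∀ F u, IsFacetNormal P F u → ∀ x ∈ F, dotZ u x = 1

/-- A monotone polytope (= smooth reflexive polytope). -/
def IsMonotonePolytope {n : ℕ} (P : Set (Fin n → ℝ)) : Prop :=
  IsLatticePolytope P ∧ IsSmoothPolytope P ∧ IsReflexivePolytope P

/-- `F` is a nonempty face of `P` of codimension `k`. -/
def HasCodim {n : ℕ} (P F : Set (Fin n → ℝ)) (k : ℕ) : Prop :=
  IsFaceOf P F ∧ F.Nonempty ∧ dimSet F + k = n

/-- The monotone blow-up `P ∩ {x : u·x ≤ 1}` of a monotone polytope at a face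
with central normal `u`. -/
def blowupSet {n : ℕ} (P : Set (Fin n → ℝ)) (u : Fin n → ℤ) : Set (Fin n → ℝ) :=
  {x ∈ P | dotZ u x ≤ 1}

/-- The region removed from `P` by the monotone blow-up with central normal `u`. -/
def removedRegion {n : ℕ} (P : Set (Fin n → ℝ)) (u : Fin n → ℤ) : Set (Fin n → ℝ) :=
  {x ∈ P | 1 < dotZ u x}

/-- `P` admits a monotone blow-up at its face `F` with central normal `u`:
every vertex of `P` not in `F` satisfies `u·v ≤ 0`, and the blow-up is again a
monotone polytope. -/
def AdmitsMonotoneBlowup {n : ℕ} (P F : Set (Fin n → ℝ)) (u : Fin n → ℤ) : Prop :=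
  IsCentralNormal P F u ∧
  (∀ v, IsVertexOf P v → v ∉ F → dotZ u v ≤ 0) ∧
  IsMonotonePolytope (blowupSet P u)

/-- The monotone simplex `{x : x i ≥ -1 ∀ i, ∑ x i ≤ 1}` in `ℝ^n`. -/
def monotoneSimplex (n : ℕ) : Set (Fin n → ℝ) :=
  {x | (∀ i, -1 ≤ x i) ∧ ∑ i, x i ≤ 1}

/-- `AGL(n,ℤ)`-equivalence of subsets of `ℝ^n`: some map `x ↦ Ax + t` with
`A ∈ GL(n,ℤ)` and `t ∈ ℤ^n` maps `P` onto `Q`. -/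
def AGLEquiv {n : ℕ} (P Q : Set (Fin n → ℝ)) : Prop :=
  ∃ (A : Matrix (Fin n) (Fin n) ℤ) (t : Fin n → ℤ), IsUnit A.det ∧
    (fun x : Fin n → ℝ => fun i => (∑ j, (A i j : ℝ) * x j) + (t i : ℝ)) '' P = Q


/-! ### Auxiliary infrastructure -/

section Aux

variable {n : ℕ}

lemma dotR_add_left (g f x : Fin n → ℝ) : dotR (g + f) x = dotR g x + dotR f x := by
  simp [dotR, add_mul, Finset.sum_add_distrib]

lemma dotR_smul_left (t : ℝ) (g x : Fin n → ℝ) : dotR (t • g) x = t * dotR g x := by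
  simp [dotR, Finset.mul_sum, mul_assoc]

lemma dotR_add_right (g x y : Fin n → ℝ) : dotR g (x + y) = dotR g x + dotR g y := by
  simp [dotR, mul_add, Finset.sum_add_distrib]

lemma dotR_smul_right (g : Fin n → ℝ) (t : ℝ) (x : Fin n → ℝ) :
    dotR g (t • x) = t * dotR g x := by
  simp [dotR, Finset.mul_sum]; apply Finset.sum_congr rfl; intros; ring

lemma dotR_sub_right (g x y : Fin n → ℝ) : dotR g (x - y) = dotR g x - dotR g y := by
  simp [dotR, mul_sub, Finset.sum_sub_distrib]

lemma dotR_neg_right (g x : Fin n → ℝ) : dotR g (-x) = -dotR g x := by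
  simp [dotR]

lemma dotZ_eq_dotR (u : Fin n → ℤ) (x : Fin n → ℝ) :
    dotZ u x = dotR (fun i => (u i : ℝ)) x := rfl

lemma dotZ_sum_left {m : ℕ} (us : Fin m → Fin n → ℤ) (x : Fin n → ℝ) :
    dotZ (∑ i, us i) x = ∑ i, dotZ (us i) x := by
  simp [dotZ, Finset.sum_mul]
  rw [Finset.sum_comm]

lemma dotR_sum_smul (g : Fin n → ℝ) {ι : Type*} (s : Finset ι) (w : ι → ℝ)
    (z : ι → Fin n → ℝ) : dotR g (∑ p ∈ s, w p • z p) = ∑ p ∈ s, w p * dotR g (z p) := by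
  classical
  induction s using Finset.induction with
  | empty => simp [dotR]
  | insert _ _ h ih =>
    rw [Finset.sum_insert h, dotR_add_right, dotR_smul_right, ih, Finset.sum_insert h]

/-- The face of a set cut out by a linear functional. -/
def faceSet (P : Set (Fin n → ℝ)) (g : Fin n → ℝ) : Set (Fin n → ℝ) :=
  {x ∈ P | ∀ y ∈ P, dotR g y ≤ dotR g x}

lemma isFaceOf_faceSet (P : Set (Fin n → ℝ)) (g : Fin n → ℝ) : IsFaceOf P (faceSet P g) :=
  ⟨g, rfl⟩

lemma isFaceOf_iff (P F : Set (Fin n → ℝ)) : IsFaceOf P F ↔ ∃ g, F = faceSet P g :=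
  Iff.rfl

end Aux

section Hull

variable {n : ℕ} (V : Finset (Fin n → ℝ))

/-- The points of `V` maximizing the functional `g`. -/
noncomputable def argmaxV (g : Fin n → ℝ) : Finset (Fin n → ℝ) :=
  @Finset.filter _ (fun p => ∀ q ∈ V, dotR g q ≤ dotR g p) (Classical.decPred _) V

lemma mem_argmaxV {g p} : p ∈ argmaxV V g ↔ p ∈ V ∧ ∀ q ∈ V, dotR g q ≤ dotR g p :=
  @Finset.mem_filter _ _ (Classical.decPred _) _ _

lemma argmaxV_subset (g) : argmaxV V g ⊆ V := fun p hp => ((mem_argmaxV V).1 hp).1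

lemma argmaxV_nonempty (hV : V.Nonempty) (g) : (argmaxV V g).Nonempty := by
  obtain ⟨p, hp, hmax⟩ := V.exists_max_image (dotR g) hV
  exact ⟨p, (mem_argmaxV V).2 ⟨hp, hmax⟩⟩

/-- Any linear functional on the hull is dominated by its value at some point of `V`. -/
lemma exists_le_on_V (g : Fin n → ℝ) {x : Fin n → ℝ}
    (hx : x ∈ convexHull ℝ (V : Set (Fin n → ℝ))) :
    ∃ p ∈ V, dotR g x ≤ dotR g p := by
  have hconv : ConvexOn ℝ (Set.univ : Set (Fin n → ℝ)) (dotR g) := by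
    refine ⟨convex_univ, ?_⟩
    intro x _ y _ a b _ _ _
    rw [dotR_add_right, dotR_smul_right, dotR_smul_right]
    simp [smul_eq_mul]
  exact hconv.exists_ge_of_mem_convexHull (Set.subset_univ _) hx

/-- Membership in a face, tested on `V` only. -/
lemma mem_faceSet_iff (g : Fin n → ℝ) {x : Fin n → ℝ}
    (hx : x ∈ convexHull ℝ (V : Set (Fin n → ℝ))) :
    x ∈ faceSet (convexHull ℝ (V : Set (Fin n → ℝ))) g ↔
      ∀ p ∈ V, dotR g p ≤ dotR g x := by
  constructor
  · intro hxf p hp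
    exact hxf.2 p (subset_convexHull ℝ _ hp)
  · intro h
    refine ⟨hx, fun y hy => ?_⟩
    obtain ⟨p, hp, hyp⟩ := exists_le_on_V V g hy
    exact hyp.trans (h p hp)

lemma argmaxV_mem_faceSet {g p} (hp : p ∈ argmaxV V g) :
    p ∈ faceSet (convexHull ℝ (V : Set (Fin n → ℝ))) g := by
  obtain ⟨hpV, hmax⟩ := (mem_argmaxV V).1 hp
  exact (mem_faceSet_iff V g (subset_convexHull ℝ _ hpV)).2 hmax

/-- Support argument: any convex-combination representation of a point of a face
is supported on points of the face. -/
lemma support_subset_faceSet (g : Fin n → ℝ) {x : Fin n → ℝ} (w : (Fin n → ℝ) → ℝ)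
    (hw₀ : ∀ p ∈ V, 0 ≤ w p) (hw₁ : ∑ p ∈ V, w p = 1)
    (hxc : V.centerMass w id = x)
    (hxf : x ∈ faceSet (convexHull ℝ (V : Set (Fin n → ℝ))) g) :
    ∀ q ∈ V, w q ≠ 0 → q ∈ argmaxV V g := by
  classical
  have hgs : dotR g x = ∑ p ∈ V, w p * dotR g p := by
    rw [← hxc, Finset.centerMass_eq_of_sum_1 _ _ hw₁]
    exact dotR_sum_smul g V w id
  have hle : ∀ p ∈ V, dotR g p ≤ dotR g x := fun p hp =>
    hxf.2 p (subset_convexHull ℝ _ hp)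
  have hsum0 : ∑ p ∈ V, w p * (dotR g x - dotR g p) = 0 := by
    have expand : ∑ p ∈ V, w p * (dotR g x - dotR g p)
        = (∑ p ∈ V, w p) * dotR g x - ∑ p ∈ V, w p * dotR g p := by
      rw [Finset.sum_mul, ← Finset.sum_sub_distrib]
      exact Finset.sum_congr rfl fun p _ => by ring
    rw [expand, hw₁, one_mul, hgs, sub_self]
  have hterm : ∀ p ∈ V, w p * (dotR g x - dotR g p) = 0 := fun p hp =>
    (Finset.sum_eq_zero_iff_of_nonneg (fun q hq => by
      have h1 := hle q hq; have h2 := hw₀ q hq; nlinarith)).1 hsum0 p hp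
  intro q hq hwq
  have hgq : dotR g q = dotR g x := by
    rcases mul_eq_zero.1 (hterm q hq) with h | h
    · exact absurd h hwq
    · linarith [sub_eq_zero.1 h]
  refine (mem_argmaxV V).2 ⟨hq, fun p hp => ?_⟩
  rw [hgq]; exact hle p hp

/-- A face of the hull is the hull of the points of `V` it contains. -/
lemma faceSet_eq_hull (g : Fin n → ℝ) :
    faceSet (convexHull ℝ (V : Set (Fin n → ℝ))) g =
      convexHull ℝ ((argmaxV V g : Finset (Fin n → ℝ)) : Set (Fin n → ℝ)) := by
  classical
  apply Set.Subset.antisymm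
  · intro x hxf
    have hxP : x ∈ convexHull ℝ (V : Set (Fin n → ℝ)) := hxf.1
    rw [Finset.convexHull_eq] at hxP
    obtain ⟨w, hw₀, hw₁, hxc⟩ := hxP
    have hsupp := support_subset_faceSet V g w hw₀ hw₁ hxc hxf
    have h1 : ∑ p ∈ V.filter (fun p => w p ≠ 0), w p = 1 := by
      rw [Finset.sum_filter_ne_zero]; exact hw₁
    have hmem := Finset.centerMass_mem_convexHull (V.filter (fun p => w p ≠ 0))
      (w := w) (z := id) (fun p hp => hw₀ p (Finset.mem_filter.1 hp).1)
      (by rw [h1]; norm_num)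
      (s := ((argmaxV V g : Finset (Fin n → ℝ)) : Set (Fin n → ℝ)))
      (fun p hp => by
        obtain ⟨hpV, hwp⟩ := Finset.mem_filter.1 hp
        exact Finset.mem_coe.2 (hsupp p hpV hwp))
    rwa [Finset.centerMass_filter_ne_zero, hxc] at hmem
  · have hsub : ((argmaxV V g : Finset (Fin n → ℝ)) : Set (Fin n → ℝ)) ⊆
        faceSet (convexHull ℝ (V : Set (Fin n → ℝ))) g :=
      fun p hp => argmaxV_mem_faceSet V (Finset.mem_coe.1 hp)
    have hconvex : Convex ℝ (faceSet (convexHull ℝ (V : Set (Fin n → ℝ))) g) := by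
      intro x hx y hy a b ha hb hab
      refine ⟨(convex_convexHull ℝ _) hx.1 hy.1 ha hb hab, fun z hz => ?_⟩
      have h1 := hx.2 z hz
      have h2 := hy.2 z hz
      rw [dotR_add_right, dotR_smul_right, dotR_smul_right]
      have h3 : dotR g z = a * dotR g z + b * dotR g z := by rw [← add_mul, hab, one_mul]
      linarith [mul_le_mul_of_nonneg_left h1 ha, mul_le_mul_of_nonneg_left h2 hb]
    exact convexHull_min hsub hconvex

lemma faceSet_nonempty (hV : V.Nonempty) (g) :
    (faceSet (convexHull ℝ (V : Set (Fin n → ℝ))) g).Nonempty := by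
  obtain ⟨p, hp⟩ := argmaxV_nonempty V hV g
  exact ⟨p, argmaxV_mem_faceSet V hp⟩

/-- The perturbation lemma: perturbing an exposing functional slightly exposes
the subface of maximizers of the perturbation. -/
lemma exists_perturb (hV : V.Nonempty) (g f : Fin n → ℝ) :
    ∃ δ : ℝ, 0 < δ ∧ argmaxV V (g + δ • f) = argmaxV (argmaxV V g) f := by
  classical
  set S := argmaxV V g with hS
  have hSne : S.Nonempty := argmaxV_nonempty V hV g
  obtain ⟨pstar, hpstar⟩ := argmaxV_nonempty S hSne f
  obtain ⟨hpS, hpmax⟩ := (mem_argmaxV S).1 hpstar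
  have hgconst : ∀ p ∈ S, ∀ q ∈ S, dotR g p = dotR g q := by
    intro p hp q hq
    obtain ⟨hpV, hp2⟩ := (mem_argmaxV V).1 hp
    obtain ⟨hqV, hq2⟩ := (mem_argmaxV V).1 hq
    exact le_antisymm (hq2 p hpV) (hp2 q hqV)
  by_cases hB : (V \ S).Nonempty
  · -- general case
    set M := dotR g pstar with hM
    have hlt : ∀ q ∈ V \ S, dotR g q < M := by
      intro q hq
      obtain ⟨hqV, hqS⟩ := Finset.mem_sdiff.1 hq
      have hle : dotR g q ≤ M := ((mem_argmaxV V).1 hpS).2 q hqV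
      rcases lt_or_eq_of_le hle with h | h
      · exact h
      · exfalso; apply hqS
        refine (mem_argmaxV V).2 ⟨hqV, fun r hr => ?_⟩
        rw [h]; exact ((mem_argmaxV V).1 hpS).2 r hr
    set M₂ := (V \ S).sup' hB (dotR g) with hM₂
    have hM₂lt : M₂ < M := by
      rw [hM₂, Finset.sup'_lt_iff]
      exact hlt
    set C := V.sup' hV (fun q => |dotR f q|) with hC
    have hCnn : 0 ≤ C := by
      obtain ⟨p, hp⟩ := hV
      exact (abs_nonneg (dotR f p)).trans (Finset.le_sup' (fun q => |dotR f q|) hp)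
    have hCb : ∀ q ∈ V, |dotR f q| ≤ C := fun q hq => Finset.le_sup' (fun q => |dotR f q|) hq
    set δ := (M - M₂) / (2 * C + 1) with hδ
    have hδpos : 0 < δ := div_pos (by linarith) (by linarith)
    refine ⟨δ, hδpos, ?_⟩
    have hkey : ∀ q ∈ V \ S, ∀ p ∈ S, dotR (g + δ • f) q < dotR (g + δ • f) p := by
      intro q hq p hp
      obtain ⟨hqV, _⟩ := Finset.mem_sdiff.1 hq
      have hpV := argmaxV_subset V g hp
      rw [dotR_add_left, dotR_add_left, dotR_smul_left, dotR_smul_left]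
      have h1 : dotR g q < M₂ + (M - M₂) := by
        have := Finset.le_sup' (dotR g) hq
        linarith
      have h2 : dotR g p = M := hgconst p hp pstar hpS
      have h3 : |dotR f q| ≤ C := hCb q hqV
      have h4 : |dotR f p| ≤ C := hCb p hpV
      have h5 : δ * (2 * C) < M - M₂ := by
        rw [hδ]
        rw [div_mul_eq_mul_div, div_lt_iff₀ (by linarith)]
        nlinarith
      have h6 : dotR f q - dotR f p ≤ 2 * C := by
        cases abs_le.1 h3; cases abs_le.1 h4; linarith
      have h7 : δ * (dotR f q - dotR f p) ≤ δ * (2 * C) := by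
        apply mul_le_mul_of_nonneg_left h6 (le_of_lt hδpos)
      have := Finset.le_sup' (dotR g) hq
      nlinarith
    apply Finset.ext
    intro p
    constructor
    · intro hp
      obtain ⟨hpV, hpmax'⟩ := (mem_argmaxV V).1 hp
      have hpS' : p ∈ S := by
        by_contra hpn
        have hq := Finset.mem_sdiff.2 ⟨hpV, hpn⟩
        have := hkey p hq pstar hpS
        have h2 := hpmax' pstar (argmaxV_subset V g hpS)
        linarith
      refine (mem_argmaxV S).2 ⟨hpS', fun q hq => ?_⟩
      have h1 := hpmax' q (argmaxV_subset V g hq)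
      rw [dotR_add_left, dotR_add_left, dotR_smul_left, dotR_smul_left] at h1
      have h2 : dotR g q = dotR g p := hgconst q hq p hpS'
      have h3 : δ * dotR f q ≤ δ * dotR f p := by linarith
      exact (mul_le_mul_iff_right₀ hδpos).1 h3
    · intro hp
      obtain ⟨hpS', hpmax'⟩ := (mem_argmaxV S).1 hp
      refine (mem_argmaxV V).2 ⟨argmaxV_subset V g hpS', fun q hq => ?_⟩
      by_cases hqS : q ∈ S
      · rw [dotR_add_left, dotR_add_left, dotR_smul_left, dotR_smul_left]
        have h1 : dotR g q = dotR g p := hgconst q hqS p hpS'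
        have h2 := hpmax' q hqS
        nlinarith
      · exact le_of_lt (hkey q (Finset.mem_sdiff.2 ⟨hq, hqS⟩) p hpS')
  · -- V = S : g is constant on V
    refine ⟨1, one_pos, ?_⟩
    have hVS : V = S := by
      apply Finset.Subset.antisymm _ (argmaxV_subset V g)
      intro q hq
      by_contra h
      exact hB ⟨q, Finset.mem_sdiff.2 ⟨hq, h⟩⟩
    apply Finset.ext
    intro p
    rw [mem_argmaxV, mem_argmaxV, ← hVS]
    constructor
    · rintro ⟨hpV, hmax'⟩
      refine ⟨hpV, fun q hq => ?_⟩
      have h1 := hmax' q hq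
      simp only [dotR_add_left, dotR_smul_left, one_mul] at h1
      have h2 : dotR g q = dotR g p := by
        have := hgconst q (hVS ▸ hq) p (hVS ▸ hpV); exact this
      linarith
    · rintro ⟨hpV, hmax'⟩
      refine ⟨hpV, fun q hq => ?_⟩
      have h1 := hmax' q hq
      simp only [dotR_add_left, dotR_smul_left, one_mul]
      have h2 : dotR g q = dotR g p := by
        have := hgconst q (hVS ▸ hq) p (hVS ▸ hpV); exact this
      linarith

end Hull


section VertexEdge

variable {n : ℕ}

lemma dotR_comm (x y : Fin n → ℝ) : dotR x y = dotR y x := by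
  simp [dotR, mul_comm]

lemma dotR_self_pos {x : Fin n → ℝ} (hx : x ≠ 0) : 0 < dotR x x := by
  obtain ⟨i, hi⟩ := Function.ne_iff.1 hx
  apply Finset.sum_pos' (fun j _ => mul_self_nonneg (x j))
  exact ⟨i, Finset.mem_univ i, mul_self_pos.2 hi⟩

lemma segment_param {a c p : Fin n → ℝ} (hp : p ∈ segment ℝ a c) :
    ∃ t : ℝ, 0 ≤ t ∧ t ≤ 1 ∧ p = a + t • (c - a) := by
  rw [segment_eq_image'] at hp
  obtain ⟨t, ht, hpt⟩ := hp
  exact ⟨t, ht.1, ht.2, hpt.symm⟩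

lemma dotR_segment (g a c : Fin n → ℝ) (t : ℝ) :
    dotR g (a + t • (c - a)) = dotR g a + t * (dotR g c - dotR g a) := by
  rw [dotR_add_right, dotR_smul_right, dotR_sub_right]

variable (V : Finset (Fin n → ℝ))

lemma vertex_mem_argmaxV {v w : Fin n → ℝ}
    (hw : {v} = faceSet (convexHull ℝ (V : Set (Fin n → ℝ))) w) : v ∈ argmaxV V w := by
  have hvf : v ∈ faceSet (convexHull ℝ (V : Set (Fin n → ℝ))) w := by
    rw [← hw]; exact rfl
  have hhull := faceSet_eq_hull V w
  have hne : (argmaxV V w).Nonempty := by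
    by_contra h
    rw [Finset.not_nonempty_iff_eq_empty] at h
    rw [hhull, h] at hvf
    simp at hvf
  obtain ⟨p, hp⟩ := hne
  have : p ∈ faceSet (convexHull ℝ (V : Set (Fin n → ℝ))) w := argmaxV_mem_faceSet V hp
  rw [← hw] at this
  rw [Set.mem_singleton_iff] at this
  rwa [← this]

lemma vertex_mem_V {v : Fin n → ℝ}
    (hv : IsVertexOf (convexHull ℝ (V : Set (Fin n → ℝ))) v) : v ∈ V := by
  obtain ⟨w, hw⟩ := hv
  exact argmaxV_subset V w (vertex_mem_argmaxV V hw)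

lemma vertex_strict {v w : Fin n → ℝ}
    (hw : {v} = faceSet (convexHull ℝ (V : Set (Fin n → ℝ))) w) :
    ∀ q, q ∈ convexHull ℝ (V : Set (Fin n → ℝ)) → q ≠ v → dotR w q < dotR w v := by
  intro q hq hqv
  have hvf : v ∈ faceSet (convexHull ℝ (V : Set (Fin n → ℝ))) w := by
    rw [← hw]; exact rfl
  rcases lt_or_eq_of_le (hvf.2 q hq) with h | h
  · exact h
  · exfalso; apply hqv
    have : q ∈ faceSet (convexHull ℝ (V : Set (Fin n → ℝ))) w := by
      refine ⟨hq, fun y hy => ?_⟩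
      rw [h]; exact hvf.2 y hy
    rw [← hw] at this; exact this

/-- A vertex lying on a segment whose endpoints are in `P` is an endpoint. -/
lemma vertex_on_segment {P : Set (Fin n → ℝ)} {v a c : Fin n → ℝ}
    (hv : IsVertexOf P v) (haP : a ∈ P) (hcP : c ∈ P) (hac : a ≠ c)
    (hvs : v ∈ segment ℝ a c) : v = a ∨ v = c := by
  obtain ⟨w, hw⟩ := hv
  have hiff := Set.ext_iff.1 hw
  have hvf : v ∈ P ∧ ∀ y ∈ P, dotR w y ≤ dotR w v := (hiff v).1 rfl
  obtain ⟨t, ht0, ht1, hvt⟩ := segment_param hvs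
  rcases eq_or_lt_of_le ht0 with h0 | h0
  · left; rw [hvt, ← h0]; simp
  rcases eq_or_lt_of_le ht1 with h1 | h1
  · right; rw [hvt, h1]; rw [one_smul]; abel
  exfalso
  have hva : dotR w a ≤ dotR w v := hvf.2 a haP
  have hvc : dotR w c ≤ dotR w v := hvf.2 c hcP
  have hvv : dotR w v = dotR w a + t * (dotR w c - dotR w a) := by
    rw [hvt]; exact dotR_segment w a c t
  have hwa : dotR w a = dotR w v := by nlinarith
  have hwc : dotR w c = dotR w v := by nlinarith
  have haf : a = v := (hiff a).2 ⟨haP, fun y hy => by rw [hwa]; exact hvf.2 y hy⟩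
  have hcf : c = v := (hiff c).2 ⟨hcP, fun y hy => by rw [hwc]; exact hvf.2 y hy⟩
  exact hac (haf.trans hcf.symm)

/-- The endpoints of an edge of the hull belong to `argmaxV` of its exposing functional. -/
lemma edge_endpoint_mem_argmaxV {g a c : Fin n → ℝ} (hac : a ≠ c)
    (hface : faceSet (convexHull ℝ (V : Set (Fin n → ℝ))) g = segment ℝ a c) :
    a ∈ argmaxV V g := by
  set f := a - c with hf
  have hD : 0 < dotR f f := dotR_self_pos (sub_ne_zero.2 hac)
  have hfca : dotR f c - dotR f a = -dotR f f := by
    rw [← dotR_sub_right]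
    have hca : c - a = -(a - c) := by abel
    rw [hca, dotR_neg_right, hf]
  have hstrict : ∀ p ∈ segment ℝ a c, p ≠ a → dotR f p < dotR f a := by
    intro p hp hpa
    obtain ⟨t, ht0, ht1, hpt⟩ := segment_param hp
    have htne : t ≠ 0 := by
      intro h; apply hpa; rw [hpt, h]; simp
    have : dotR f p = dotR f a + t * (dotR f c - dotR f a) := by
      rw [hpt]; exact dotR_segment f a c t
    rw [hfca] at this
    have ht0' : 0 < t := lt_of_le_of_ne ht0 (Ne.symm htne)
    nlinarith
  have haseg : a ∈ segment ℝ a c := left_mem_segment ℝ a c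
  have haf : a ∈ faceSet (convexHull ℝ (V : Set (Fin n → ℝ))) g := by
    rw [hface]; exact haseg
  have hahull : a ∈ convexHull ℝ ((argmaxV V g : Finset (Fin n → ℝ)) : Set (Fin n → ℝ)) := by
    rw [← faceSet_eq_hull]; exact haf
  obtain ⟨p, hp, hap⟩ := exists_le_on_V (argmaxV V g) f hahull
  have hpseg : p ∈ segment ℝ a c := by
    rw [← hface]; exact argmaxV_mem_faceSet V hp
  by_cases hpa : p = a
  · rwa [← hpa]
  · exact absurd hap (not_le.2 (hstrict p hpseg hpa))

/-- The endpoints of an edge of the hull are vertices. -/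
lemma edge_endpoint_vertex {g a c : Fin n → ℝ} (hac : a ≠ c)
    (hface : faceSet (convexHull ℝ (V : Set (Fin n → ℝ))) g = segment ℝ a c) :
    IsVertexOf (convexHull ℝ (V : Set (Fin n → ℝ))) a := by
  set f := a - c with hf
  have hD : 0 < dotR f f := dotR_self_pos (sub_ne_zero.2 hac)
  have hfca : dotR f c - dotR f a = -dotR f f := by
    rw [← dotR_sub_right]
    have hca : c - a = -(a - c) := by abel
    rw [hca, dotR_neg_right, hf]
  have haS : a ∈ argmaxV V g := edge_endpoint_mem_argmaxV V hac hface
  have hV : V.Nonempty := ⟨a, argmaxV_subset V g haS⟩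
  obtain ⟨δ, hδpos, hδ⟩ := exists_perturb V hV g f
  have hle : ∀ p ∈ segment ℝ a c, dotR f p ≤ dotR f a := by
    intro p hp
    obtain ⟨t, ht0, ht1, hpt⟩ := segment_param hp
    have : dotR f p = dotR f a + t * (dotR f c - dotR f a) := by
      rw [hpt]; exact dotR_segment f a c t
    rw [hfca] at this
    nlinarith
  have heq : ∀ p ∈ segment ℝ a c, dotR f a ≤ dotR f p → p = a := by
    intro p hp hge
    obtain ⟨t, ht0, ht1, hpt⟩ := segment_param hp
    have : dotR f p = dotR f a + t * (dotR f c - dotR f a) := by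
      rw [hpt]; exact dotR_segment f a c t
    rw [hfca] at this
    have ht : t = 0 := by nlinarith
    rw [hpt, ht]; simp
  have hsingle : argmaxV (argmaxV V g) f = {a} := by
    apply Finset.eq_singleton_iff_unique_mem.2
    constructor
    · refine (mem_argmaxV _).2 ⟨haS, fun q hq => ?_⟩
      apply hle
      rw [← hface]
      exact argmaxV_mem_faceSet V hq
    · intro p hp
      obtain ⟨hpS, hpmax⟩ := (mem_argmaxV _).1 hp
      apply heq p
      · rw [← hface]; exact argmaxV_mem_faceSet V hpS
      · exact hpmax a haS
  refine ⟨g + δ • f, ?_⟩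
  show ({a} : Set (Fin n → ℝ)) = faceSet (convexHull ℝ (V : Set (Fin n → ℝ))) (g + δ • f)
  rw [faceSet_eq_hull, hδ, hsingle]
  simp

end VertexEdge


section Pivot

variable {n : ℕ}

lemma convex_faceSet {P : Set (Fin n → ℝ)} (hP : Convex ℝ P) (g : Fin n → ℝ) :
    Convex ℝ (faceSet P g) := by
  intro x hx y hy a b ha hb hab
  refine ⟨hP hx.1 hy.1 ha hb hab, fun z hz => ?_⟩
  have h1 := hx.2 z hz
  have h2 := hy.2 z hz
  rw [dotR_add_right, dotR_smul_right, dotR_smul_right]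
  have h3 : dotR g z = a * dotR g z + b * dotR g z := by rw [← add_mul, hab, one_mul]
  linarith [mul_le_mul_of_nonneg_left h1 ha, mul_le_mul_of_nonneg_left h2 hb]

/-- Separating functional for a pair of independent directions. -/
lemma exists_sep_functional {x y : Fin n → ℝ} (hx : x ≠ 0) (hy : ∀ t : ℝ, y ≠ t • x) :
    ∃ φ : Fin n → ℝ, dotR φ x = 1 ∧ dotR φ y = -1 := by
  have hxx : 0 < dotR x x := dotR_self_pos hx
  set s := dotR x y / dotR x x with hs
  set z := y - s • x with hz
  have hyz : y = z + s • x := by rw [hz]; abel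
  have hxz : dotR x z = 0 := by
    rw [hz, dotR_sub_right, dotR_smul_right, hs]
    field_simp
    ring
  have hzx : dotR z x = 0 := by rw [dotR_comm]; exact hxz
  have hzne : z ≠ 0 := by
    intro h
    apply hy s
    rw [hyz, h, zero_add]
  have hzz : 0 < dotR z z := dotR_self_pos hzne
  set lam := (dotR x y / dotR x x + 1) / dotR z z with hlam
  refine ⟨(1 / dotR x x) • x - lam • z, ?_, ?_⟩
  · rw [dotR_comm, dotR_sub_right, dotR_smul_right, dotR_smul_right, dotR_comm x x,
      dotR_comm x z, hzx]
    field_simp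
    ring
  · have hzy : dotR z y = dotR z z := by
      rw [hyz, dotR_add_right, dotR_smul_right, hzx, mul_zero, add_zero]
    rw [dotR_comm, dotR_sub_right, dotR_smul_right, dotR_smul_right, dotR_comm y x,
      dotR_comm y z, hzy, hlam]
    field_simp
    ring

/-- The pivot construction: rotating a strict exposing functional of `v` towards `χ`
until it first touches another point of `S`. -/
lemma pivot (S : Finset (Fin n → ℝ)) (w χ : Fin n → ℝ) {v : Fin n → ℝ}
    (hvS : v ∈ S)
    (hstrict : ∀ q ∈ S, q ≠ v → dotR w q < dotR w v)
    (hB : ∃ q ∈ S, dotR χ v < dotR χ q) :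
    ∃ h : Fin n → ℝ, (∀ q ∈ S, dotR h q ≤ dotR h v) ∧
      (∃ q ∈ S, q ≠ v ∧ dotR h q = dotR h v) ∧
      (∀ q ∈ S, dotR h q = dotR h v → q = v ∨ dotR χ v < dotR χ q) := by
  classical
  set B := S.filter (fun q => dotR χ v < dotR χ q) with hBdef
  have hBne : B.Nonempty := by
    obtain ⟨q, hq, hlt⟩ := hB
    exact ⟨q, Finset.mem_filter.2 ⟨hq, hlt⟩⟩
  have hBv : ∀ q ∈ B, q ≠ v := by
    intro q hq h
    have := (Finset.mem_filter.1 hq).2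
    rw [h] at this; exact lt_irrefl _ this
  set ratio := fun q => (dotR w v - dotR w q) / (dotR χ q - dotR χ v) with hratio
  have hratiopos : ∀ q ∈ B, 0 < ratio q := by
    intro q hq
    obtain ⟨hqS, hlt⟩ := Finset.mem_filter.1 hq
    exact div_pos (by linarith [hstrict q hqS (hBv q hq)]) (by linarith)
  set sstar := B.inf' hBne ratio with hsstar
  have hspos : 0 < sstar := by
    rw [hsstar, Finset.lt_inf'_iff]
    exact hratiopos
  refine ⟨w + sstar • χ, ?_, ?_, ?_⟩
  · intro q hqS
    by_cases hqv : q = v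
    · rw [hqv]
    simp only [dotR_add_left, dotR_smul_left]
    by_cases hqB : q ∈ B
    · have hle : sstar ≤ ratio q := Finset.inf'_le ratio hqB
      have hpos : 0 < dotR χ q - dotR χ v := by
        linarith [(Finset.mem_filter.1 hqB).2]
      rw [hratio] at hle
      have := (le_div_iff₀ hpos).1 hle
      linarith
    · have hχ : dotR χ q ≤ dotR χ v := by
        by_contra h
        exact hqB (Finset.mem_filter.2 ⟨hqS, by linarith⟩)
      have := hstrict q hqS hqv
      nlinarith
  · obtain ⟨q0, hq0B, hq0⟩ := Finset.exists_mem_eq_inf' hBne ratio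
    obtain ⟨hq0S, hq0lt⟩ := Finset.mem_filter.1 hq0B
    refine ⟨q0, hq0S, hBv q0 hq0B, ?_⟩
    simp only [dotR_add_left, dotR_smul_left]
    have hd : 0 < dotR χ q0 - dotR χ v := by linarith
    have hkey : sstar * (dotR χ q0 - dotR χ v) = dotR w v - dotR w q0 := by
      have hs : sstar = (dotR w v - dotR w q0) / (dotR χ q0 - dotR χ v) := by
        rw [hsstar, hq0]
      rw [hs]
      exact div_mul_cancel₀ _ (ne_of_gt hd)
    linear_combination hkey
  · intro q hqS heq
    by_cases hqv : q = v
    · exact Or.inl hqv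
    right
    simp only [dotR_add_left, dotR_smul_left] at heq
    have hw := hstrict q hqS hqv
    by_contra h
    push_neg at h
    nlinarith

end Pivot

section ImprovingEdge

variable {n : ℕ} (V : Finset (Fin n → ℝ))

/-- Key lemma: if a vertex does not maximize a functional, some edge at the vertex
contains a point with strictly bigger value. -/
lemma improving_edge_aux (w u' : Fin n → ℝ) (v : Fin n → ℝ)
    (hstrict : ∀ q ∈ V, q ≠ v → dotR w q < dotR w v) :
    ∀ k : ℕ, ∀ h1 : Fin n → ℝ,
    v ∈ argmaxV V h1 →
    (∀ p ∈ argmaxV V h1, p ≠ v → dotR u' v < dotR u' p) →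
    (∃ p ∈ argmaxV V h1, p ≠ v) →
    (argmaxV V h1).card ≤ k →
    ∃ E z, IsEdgeOf (convexHull ℝ (V : Set (Fin n → ℝ))) E ∧ v ∈ E ∧ z ∈ E ∧
      dotR u' v < dotR u' z := by
  intro k
  induction k with
  | zero =>
    intro h1 hv _ _ hcard
    exfalso
    have : 0 < (argmaxV V h1).card := Finset.card_pos.2 ⟨v, hv⟩
    omega
  | succ k ih =>
    intro h1 hvS hbetter hex hcard
    set S := argmaxV V h1 with hSdef
    obtain ⟨q0, hq0S, hq0v⟩ := hex
    have hq0Vne : q0 - v ≠ 0 := sub_ne_zero.2 hq0v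
    have hvV : v ∈ V := argmaxV_subset V h1 hvS
    have hD : 0 < dotR (q0 - v) (q0 - v) := dotR_self_pos hq0Vne
    by_cases hcol : ∀ q ∈ S, q ≠ v → ∃ t : ℝ, q - v = t • (q0 - v)
    · -- collinear case: the face is an edge
      have htpos : ∀ q ∈ S, q ≠ v → ∀ t : ℝ, q - v = t • (q0 - v) → 0 < t := by
        intro q hqS hqv t hqt
        have hw1 : dotR w (q - v) < 0 := by
          rw [dotR_sub_right]
          linarith [hstrict q (argmaxV_subset V h1 hqS) hqv]
        have hw2 : dotR w (q0 - v) < 0 := by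
          rw [dotR_sub_right]
          linarith [hstrict q0 (argmaxV_subset V h1 hq0S) hq0v]
        rw [hqt, dotR_smul_right] at hw1
        nlinarith
      -- find the farthest point
      obtain ⟨qm, hqmS, hqmmax⟩ := S.exists_max_image (fun q => dotR (q0 - v) q) ⟨q0, hq0S⟩
      have hqmv : qm ≠ v := by
        intro h
        have := hqmmax q0 hq0S
        rw [h] at this
        have : dotR (q0 - v) q0 - dotR (q0 - v) v ≤ 0 := by linarith
        rw [← dotR_sub_right] at this
        linarith
      obtain ⟨tm, htm⟩ := hcol qm hqmS hqmv
      have htmpos : 0 < tm := htpos qm hqmS hqmv tm htm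
      have hseg : faceSet (convexHull ℝ (V : Set (Fin n → ℝ))) h1 = segment ℝ v qm := by
        rw [faceSet_eq_hull]
        apply Set.Subset.antisymm
        · apply convexHull_min _ (convex_segment v qm)
          intro q hq
          have hqS : q ∈ S := Finset.mem_coe.1 hq
          by_cases hqv : q = v
          · rw [hqv]; exact left_mem_segment ℝ v qm
          obtain ⟨t, ht⟩ := hcol q hqS hqv
          have htq : 0 < t := htpos q hqS hqv t ht
          have htle : t ≤ tm := by
            have h1' := hqmmax q hqS
            have e1 : dotR (q0 - v) q - dotR (q0 - v) v = t * dotR (q0 - v) (q0 - v) := by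
              rw [← dotR_sub_right, ht, dotR_smul_right]
            have e2 : dotR (q0 - v) qm - dotR (q0 - v) v = tm * dotR (q0 - v) (q0 - v) := by
              rw [← dotR_sub_right, htm, dotR_smul_right]
            nlinarith
          rw [segment_eq_image']
          refine ⟨t / tm, ⟨div_nonneg (le_of_lt htq) (le_of_lt htmpos),
            (div_le_one htmpos).2 htle⟩, ?_⟩
          show v + (t / tm) • (qm - v) = q
          have : (t / tm) • (qm - v) = t • (q0 - v) := by
            rw [htm, smul_smul]
            congr 1
            field_simp
          rw [this, ← ht]
          abel
        · have hconv := convex_faceSet (convex_convexHull ℝ (V : Set (Fin n → ℝ))) h1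
          rw [faceSet_eq_hull] at hconv
          exact hconv.segment_subset
            (by rw [← faceSet_eq_hull]; exact argmaxV_mem_faceSet V hvS)
            (by rw [← faceSet_eq_hull]; exact argmaxV_mem_faceSet V hqmS)
      refine ⟨segment ℝ v qm, qm, ⟨⟨h1, hseg.symm⟩, v, qm, Ne.symm hqmv, rfl⟩,
        left_mem_segment ℝ v qm, right_mem_segment ℝ v qm, hbetter qm hqmS hqmv⟩
    · -- non-collinear: shrink the face
      push_neg at hcol
      obtain ⟨q1, hq1S, hq1v, hq1t⟩ := hcol
      obtain ⟨φ, hφ0, hφ1⟩ := exists_sep_functional hq0Vne (fun t => hq1t t ∘ id)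
      have hstrictS : ∀ q ∈ S, q ≠ v → dotR w q < dotR w v := fun q hq =>
        hstrict q (argmaxV_subset V h1 hq)
      have hφq0 : dotR φ v < dotR φ q0 := by
        rw [dotR_sub_right] at hφ0
        linarith
      obtain ⟨h', hh1, hh2, hh3⟩ := pivot S w φ hvS hstrictS ⟨q0, hq0S, hφq0⟩
      have hVne : V.Nonempty := ⟨v, hvV⟩
      obtain ⟨δ, hδpos, hδ⟩ := exists_perturb V hVne h1 h'
      rw [← hSdef] at hδ
      set S2 := argmaxV S h' with hS2def
      have hS2sub : S2 ⊆ S := argmaxV_subset S h'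
      have hvS2 : v ∈ S2 := (mem_argmaxV S).2 ⟨hvS, hh1⟩
      have hmax' : ∀ p ∈ S2, dotR h' p = dotR h' v := by
        intro p hp
        exact le_antisymm (hh1 p (hS2sub hp)) (((mem_argmaxV S).1 hp).2 v hvS)
      have hq1not : q1 ∉ S2 := by
        intro h
        rcases hh3 q1 hq1S (hmax' q1 h) with h' | h'
        · exact hq1v h'
        · rw [dotR_sub_right] at hφ1
          linarith
      have hS2ssub : S2 ⊂ S := ⟨hS2sub, fun h => hq1not (h hq1S)⟩
      have hcard2 : (argmaxV V (h1 + δ • h')).card ≤ k := by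
        rw [hδ]
        have := Finset.card_lt_card hS2ssub
        omega
      apply ih (h1 + δ • h')
      · rw [hδ]; exact hvS2
      · intro p hp hpv
        rw [hδ] at hp
        exact hbetter p (hS2sub hp) hpv
      · obtain ⟨q2, hq2S, hq2v, hq2eq⟩ := hh2
        refine ⟨q2, ?_, hq2v⟩
        rw [hδ]
        refine (mem_argmaxV S).2 ⟨hq2S, fun r hr => ?_⟩
        rw [hq2eq]
        exact hh1 r hr
      · exact hcard2

/-- If a vertex does not maximize `u'`, there is an edge at the vertex containing a
point with strictly larger `u'`-value. -/
lemma exists_improving_edge (u' : Fin n → ℝ) {v : Fin n → ℝ}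
    (hv : IsVertexOf (convexHull ℝ (V : Set (Fin n → ℝ))) v)
    (himp : ∃ p ∈ V, dotR u' v < dotR u' p) :
    ∃ E z, IsEdgeOf (convexHull ℝ (V : Set (Fin n → ℝ))) E ∧ v ∈ E ∧ z ∈ E ∧
      dotR u' v < dotR u' z := by
  obtain ⟨w, hw⟩ := hv
  have hw' : ({v} : Set (Fin n → ℝ)) = faceSet (convexHull ℝ (V : Set (Fin n → ℝ))) w := hw
  have hvV : v ∈ V := vertex_mem_V V ⟨w, hw⟩
  have hstrict : ∀ q ∈ V, q ≠ v → dotR w q < dotR w v := by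
    intro q hq hqv
    exact vertex_strict V hw' q (subset_convexHull ℝ _ hq) hqv
  obtain ⟨p, hpV, hpimp⟩ := himp
  have hpv : p ≠ v := by
    intro h; rw [h] at hpimp; exact lt_irrefl _ hpimp
  obtain ⟨h1, hh1, hh2, hh3⟩ := pivot V w u' hvV hstrict ⟨p, hpV, hpimp⟩
  have hvS : v ∈ argmaxV V h1 := (mem_argmaxV V).2 ⟨hvV, hh1⟩
  have hmax' : ∀ q ∈ argmaxV V h1, dotR h1 q = dotR h1 v := by
    intro q hq
    exact le_antisymm (hh1 q (argmaxV_subset V h1 hq)) (((mem_argmaxV V).1 hq).2 v hvV)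
  apply improving_edge_aux V w u' v hstrict (argmaxV V h1).card h1 hvS
  · intro q hq hqv
    rcases hh3 q (argmaxV_subset V h1 hq) (hmax' q hq) with h | h
    · exact absurd h hqv
    · exact h
  · obtain ⟨q2, hq2V, hq2v, hq2eq⟩ := hh2
    refine ⟨q2, (mem_argmaxV V).2 ⟨hq2V, fun r hr => ?_⟩, hq2v⟩
    rw [hq2eq]
    exact hh1 r hr
  · exact le_refl _

/-- Every face contains a vertex. -/
lemma exists_vertex_in_faceSet (g : Fin n → ℝ) (hV : V.Nonempty) :
    ∃ q, IsVertexOf (convexHull ℝ (V : Set (Fin n → ℝ))) q ∧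
      q ∈ faceSet (convexHull ℝ (V : Set (Fin n → ℝ))) g := by
  suffices h : ∀ k : ℕ, ∀ g : Fin n → ℝ, (argmaxV V g).card ≤ k →
      ∃ q, IsVertexOf (convexHull ℝ (V : Set (Fin n → ℝ))) q ∧
        q ∈ faceSet (convexHull ℝ (V : Set (Fin n → ℝ))) g by
    exact h (argmaxV V g).card g (le_refl _)
  intro k
  induction k with
  | zero =>
    intro g hcard
    exfalso
    have := Finset.card_pos.2 (argmaxV_nonempty V hV g)
    omega
  | succ k ih =>
    intro g hcard
    set S := argmaxV V g with hSdef
    by_cases hsing : ∃ q0 q1, q0 ∈ S ∧ q1 ∈ S ∧ q0 ≠ q1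
    · obtain ⟨q0, q1, hq0, hq1, hne⟩ := hsing
      set φ := q0 - q1 with hφdef
      obtain ⟨δ, hδpos, hδ⟩ := exists_perturb V hV g φ
      rw [← hSdef] at hδ
      have hq1not : q1 ∉ argmaxV S φ := by
        intro h
        have := ((mem_argmaxV S).1 h).2 q0 hq0
        have hd : 0 < dotR φ q0 - dotR φ q1 := by
          rw [← dotR_sub_right, hφdef]
          exact dotR_self_pos (sub_ne_zero.2 hne)
        linarith
      have hssub : argmaxV S φ ⊂ S := ⟨argmaxV_subset S φ, fun h => hq1not (h hq1)⟩
      have hcard2 : (argmaxV V (g + δ • φ)).card ≤ k := by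
        rw [hδ]
        have := Finset.card_lt_card hssub
        omega
      obtain ⟨q, hq1, hq2⟩ := ih (g + δ • φ) hcard2
      refine ⟨q, hq1, ?_⟩
      have hsub : faceSet (convexHull ℝ (V : Set (Fin n → ℝ))) (g + δ • φ) ⊆
          faceSet (convexHull ℝ (V : Set (Fin n → ℝ))) g := by
        rw [faceSet_eq_hull, faceSet_eq_hull, hδ]
        exact convexHull_mono (by exact_mod_cast Finset.coe_subset.2 (argmaxV_subset S φ))
      exact hsub hq2
    · push_neg at hsing
      obtain ⟨q, hq⟩ := argmaxV_nonempty V hV g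
      have hSq : S = {q} := by
        apply Finset.eq_singleton_iff_unique_mem.2
        exact ⟨hq, fun p hp => hsing p q hp hq⟩
      refine ⟨q, ⟨g, ?_⟩, argmaxV_mem_faceSet V hq⟩
      show ({q} : Set (Fin n → ℝ)) = faceSet (convexHull ℝ (V : Set (Fin n → ℝ))) g
      rw [faceSet_eq_hull, ← hSdef, hSq]
      simp

end ImprovingEdge


section IntVec

variable {n : ℕ}

/-- Cast an integer vector to a real vector. -/
def castZ (u : Fin n → ℤ) : Fin n → ℝ := fun i => (u i : ℝ)

lemma dotZ_eq_dotR_castZ (u : Fin n → ℤ) (x : Fin n → ℝ) : dotZ u x = dotR (castZ u) x := rfl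

/-- Integer dot product. -/
def intDot (u e : Fin n → ℤ) : ℤ := ∑ i, u i * e i

lemma dotR_castZ (u e : Fin n → ℤ) : dotR (castZ u) (castZ e) = (intDot u e : ℝ) := by
  simp only [dotR, castZ, intDot]
  push_cast
  rfl

lemma primitive_ne_zero {e : Fin n → ℤ} (h : IsPrimitiveZ e) : e ≠ 0 := by
  intro h0
  have : Finset.univ.gcd e = 0 := Finset.gcd_eq_zero_iff.2 (fun i _ => by rw [h0]; rfl)
  rw [IsPrimitiveZ] at h
  omega

lemma castZ_ne_zero {e : Fin n → ℤ} (h : e ≠ 0) : castZ e ≠ 0 := by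
  intro h0
  apply h
  funext i
  have := congrFun h0 i
  simpa [castZ] using this

/-- Two primitive integer vectors that are positive real multiples of each other
are equal. -/
lemma primitive_eq_of_proportional {e f : Fin n → ℤ} (he : IsPrimitiveZ e)
    (hf : IsPrimitiveZ f) {α β : ℝ} (hα : 0 < α) (hβ : 0 < β)
    (h : ∀ i, α * (e i : ℝ) = β * (f i : ℝ)) : e = f := by
  have hcross : ∀ i j, e i * f j = e j * f i := by
    intro i j
    have h1 := h i
    have h2 := h j
    have : (e i : ℝ) * (f j : ℝ) = (e j : ℝ) * (f i : ℝ) := by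
      apply mul_left_cancel₀ (ne_of_gt hα)
      calc α * ((e i : ℝ) * f j) = (α * e i) * f j := by ring
        _ = (β * f i) * f j := by rw [h1]
        _ = (β * f j) * f i := by ring
        _ = (α * e j) * f i := by rw [h2]
        _ = α * ((e j : ℝ) * f i) := by ring
    exact_mod_cast this
  obtain ⟨i0, hi0⟩ := Function.ne_iff.1 (primitive_ne_zero hf)
  have hfi0 : f i0 ≠ 0 := hi0
  have hei0 : e i0 ≠ 0 := by
    intro h0
    have h1 := h i0
    rw [h0] at h1
    simp only [Int.cast_zero, mul_zero] at h1
    have : (f i0 : ℝ) = 0 := by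
      by_contra h2
      have := mul_ne_zero (ne_of_gt hβ) h2
      exact this h1.symm
    exact hfi0 (by exact_mod_cast this)
  have he' : Finset.univ.gcd e = 1 := he
  have hf' : Finset.univ.gcd f = 1 := hf
  have hdvd1 : f i0 ∣ e i0 := by
    have hd : ∀ j, f i0 ∣ e i0 * f j := fun j =>
      ⟨e j, by rw [mul_comm (f i0) (e j)]; exact hcross i0 j⟩
    have : f i0 ∣ Finset.univ.gcd (fun j => e i0 * f j) :=
      Finset.dvd_gcd (fun j _ => hd j)
    rw [Finset.gcd_mul_left, hf', mul_one] at this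
    exact dvd_normalize_iff.1 this
  have hdvd2 : e i0 ∣ f i0 := by
    have hd : ∀ j, e i0 ∣ f i0 * e j := fun j =>
      ⟨f j, by rw [mul_comm (f i0) (e j)]; exact (hcross i0 j).symm⟩
    have : e i0 ∣ Finset.univ.gcd (fun j => f i0 * e j) :=
      Finset.dvd_gcd (fun j _ => hd j)
    rw [Finset.gcd_mul_left, he', mul_one] at this
    exact dvd_normalize_iff.1 this
  have hsame : e i0 = f i0 := by
    obtain ⟨c, hc⟩ := hdvd1
    obtain ⟨c', hc'⟩ := hdvd2
    have hcc : c' * c = 1 := by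
      have h2 : e i0 * 1 = e i0 * (c' * c) := by
        rw [mul_one]
        calc e i0 = f i0 * c := hc
          _ = (e i0 * c') * c := by rw [← hc']
          _ = e i0 * (c' * c) := by ring
      exact (mul_left_cancel₀ hei0 h2).symm
    have hcc' : c * c' = 1 := by rw [mul_comm]; exact hcc
    rcases Int.eq_one_or_neg_one_of_mul_eq_one hcc' with h1 | h1
    · rw [hc, h1, mul_one]
    · exfalso
      have h2 := h i0
      rw [hc, h1] at h2
      push_cast at h2
      have hne : (f i0 : ℝ) ≠ 0 := by exact_mod_cast hfi0
      rcases hne.lt_or_gt with hlt | hlt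
      · nlinarith [h2]
      · nlinarith [h2]
  funext j
  have hc := hcross i0 j
  rw [hsame] at hc
  have : f i0 * f j = f i0 * e j := by rw [hc]; ring
  exact (mul_left_cancel₀ hfi0 this).symm

end IntVec


section DualBasis

variable {n : ℕ}

/-- The real matrix whose rows are the (cast) direction vectors. -/
def rmat (d : Fin n → Fin n → ℤ) : Matrix (Fin n) (Fin n) ℝ :=
  Matrix.of (fun k j => (d k j : ℝ))

/-- The dual basis functionals of the edge directions. -/
noncomputable def dualB (d : Fin n → Fin n → ℤ) : Fin n → Fin n → ℝ :=
  fun k => fun j => (rmat d)⁻¹ j k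

lemma rmat_isUnit_det {d : Fin n → Fin n → ℤ} (hdet : IsUnit (Matrix.det (Matrix.of d))) :
    IsUnit (rmat d).det := by
  have hmap : (rmat d).det = ((Matrix.of d).det : ℝ) :=
    (RingHom.map_det (Int.castRingHom ℝ) (Matrix.of d)).symm
  rcases Int.isUnit_iff.1 hdet with h | h <;>
    · rw [hmap, h]
      simp

lemma dualB_pair {d : Fin n → Fin n → ℤ} (hdet : IsUnit (Matrix.det (Matrix.of d)))
    (k k' : Fin n) :
    dotR (dualB d k) (castZ (d k')) = if k' = k then 1 else 0 := by
  have h := Matrix.mul_nonsing_inv (rmat d) (rmat_isUnit_det hdet)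
  have h2 : ((rmat d) * (rmat d)⁻¹) k' k = (1 : Matrix (Fin n) (Fin n) ℝ) k' k := by rw [h]
  rw [Matrix.mul_apply, Matrix.one_apply] at h2
  rw [← h2, dotR]
  apply Finset.sum_congr rfl
  intro j _
  simp [dualB, castZ, rmat, mul_comm]

lemma dualB_expand {d : Fin n → Fin n → ℤ} (hdet : IsUnit (Matrix.det (Matrix.of d)))
    (y : Fin n → ℝ) : y = ∑ k, dotR (dualB d k) y • castZ (d k) := by
  have h := Matrix.nonsing_inv_mul (rmat d) (rmat_isUnit_det hdet)
  funext j
  have h2 : ∀ i, ((rmat d)⁻¹ * (rmat d)) i j = (1 : Matrix (Fin n) (Fin n) ℝ) i j := by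
    intro i; rw [h]
  rw [Finset.sum_apply]
  have step : ∀ k, (dotR (dualB d k) y • castZ (d k)) j
      = ∑ i, ((rmat d)⁻¹ i k * y i) * rmat d k j := by
    intro k
    simp only [Pi.smul_apply, smul_eq_mul, dotR, dualB, castZ]
    rw [Finset.sum_mul]
    rfl
  rw [Finset.sum_congr rfl (fun k _ => step k), Finset.sum_comm]
  have : ∀ i, ∑ k, ((rmat d)⁻¹ i k * y i) * rmat d k j = y i * ((rmat d)⁻¹ * (rmat d)) i j := by
    intro i
    rw [Matrix.mul_apply, Finset.mul_sum]
    apply Finset.sum_congr rfl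
    intro k _
    ring
  rw [Finset.sum_congr rfl (fun i _ => this i)]
  rw [Finset.sum_congr rfl (fun i (_ : i ∈ Finset.univ) => by rw [h2 i])]
  simp [Matrix.one_apply]

lemma dualB_linearIndependent {d : Fin n → Fin n → ℤ}
    (hdet : IsUnit (Matrix.det (Matrix.of d))) :
    LinearIndependent ℝ (fun k => castZ (d k)) := by
  rw [linearIndependent_iff']
  intro s g hsum i hi
  have h1 : dotR (dualB d i) (∑ k ∈ s, g k • castZ (d k)) = 0 := by
    rw [hsum]
    simp [dotR]
  rw [dotR_sum_smul] at h1
  have h2 : ∀ k ∈ s, g k * dotR (dualB d i) (castZ (d k))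
      = if k = i then g k else 0 := by
    intro k _
    rw [dualB_pair hdet]
    split_ifs with hk
    · rw [mul_one]
    · rw [mul_zero]
  rw [Finset.sum_congr rfl h2, Finset.sum_ite_eq' s i g] at h1
  rw [if_pos hi] at h1
  exact h1

end DualBasis


section SmoothVertex

variable {n : ℕ}

lemma dotR_neg_left (g x : Fin n → ℝ) : dotR (-g) x = -dotR g x := by
  simp [dotR]

/-- An edge at a vertex is a segment from the vertex, in the direction of its
primitive direction vector. -/
lemma edge_ray {P E : Set (Fin n → ℝ)} {v : Fin n → ℝ} {dv : Fin n → ℤ}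
    (hE : IsEdgeOf P E) (hv : IsVertexOf P v) (hvE : v ∈ E) (hdir : EdgeDirAt v E dv) :
    ∃ c', E = segment ℝ v c' ∧ c' ≠ v ∧ ∃ r : ℝ, 0 < r ∧ c' - v = r • castZ dv := by
  obtain ⟨⟨g0, hg0⟩, a, bb, hab, hEseg⟩ := hE
  have hEsub : E ⊆ P := by rw [hg0]; exact fun x hx => hx.1
  have haP : a ∈ P := hEsub (hEseg ▸ left_mem_segment ℝ a bb)
  have hbP : bb ∈ P := hEsub (hEseg ▸ right_mem_segment ℝ a bb)
  have hvab : v = a ∨ v = bb := vertex_on_segment hv haP hbP hab (hEseg ▸ hvE)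
  obtain ⟨c', hseg', hc'v⟩ : ∃ c', E = segment ℝ v c' ∧ c' ≠ v := by
    rcases hvab with h | h
    · refine ⟨bb, by rw [hEseg, h], ?_⟩
      intro hh; exact hab (h ▸ hh.symm)
    · refine ⟨a, by rw [hEseg, h, segment_symm], ?_⟩
      intro hh; exact hab (h ▸ hh)
  obtain ⟨hprim, w0, hw0E, t0, ht0, hw0⟩ := hdir
  have hw0v : w0 - v = t0 • castZ dv := by
    funext i
    rw [Pi.smul_apply, Pi.sub_apply, smul_eq_mul]
    exact hw0 i
  obtain ⟨s, hs0, hs1, hw0s⟩ := segment_param (hseg' ▸ hw0E)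
  have h1 : s • (c' - v) = t0 • castZ dv := by
    rw [← hw0v, hw0s]; abel
  have hsne : s ≠ 0 := by
    intro h
    rw [h, zero_smul] at h1
    have hcast : castZ dv = 0 := by
      rcases smul_eq_zero.1 h1.symm with h' | h'
      · exact absurd h' (ne_of_gt ht0)
      · exact h'
    exact castZ_ne_zero (primitive_ne_zero hprim) hcast
  have hspos : 0 < s := lt_of_le_of_ne hs0 (Ne.symm hsne)
  refine ⟨c', hseg', hc'v, t0 / s, div_pos ht0 hspos, ?_⟩
  have h2 : c' - v = (1 / s) • (t0 • castZ dv) := by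
    rw [← h1, smul_smul, one_div, inv_mul_cancel₀ hsne, one_smul]
  rw [h2, smul_smul]
  congr 1
  field_simp

/-- Every point of an edge at a vertex lies on the outgoing ray. -/
lemma edge_point_ray {P E : Set (Fin n → ℝ)} {v : Fin n → ℝ} {dv : Fin n → ℤ}
    (hE : IsEdgeOf P E) (hv : IsVertexOf P v) (hvE : v ∈ E) (hdir : EdgeDirAt v E dv) :
    ∀ z ∈ E, ∃ t : ℝ, 0 ≤ t ∧ z - v = t • castZ dv := by
  obtain ⟨c', hseg', hc'v, r, hr, hc'⟩ := edge_ray hE hv hvE hdir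
  intro z hz
  obtain ⟨θ, hθ0, hθ1, hzt⟩ := segment_param (hseg' ▸ hz)
  refine ⟨θ * r, mul_nonneg hθ0 (le_of_lt hr), ?_⟩
  rw [hzt]
  have : v + θ • (c' - v) - v = θ • (c' - v) := by abel
  rw [this, hc', smul_smul]

variable (V : Finset (Fin n → ℝ)) {v : Fin n → ℝ} (Ed : Fin n → Set (Fin n → ℝ))
  (d : Fin n → Fin n → ℤ)

/-- Tangent-cone inequality: at a smooth vertex, every point of `P` has nonnegative
coordinates in the edge-direction basis. -/
lemma tangent_cone
    (hv : IsVertexOf (convexHull ℝ (V : Set (Fin n → ℝ))) v)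
    (hEd : ∀ i, IsEdgeOf (convexHull ℝ (V : Set (Fin n → ℝ))) (Ed i) ∧ v ∈ Ed i ∧
      EdgeDirAt v (Ed i) (d i))
    (hEdall : ∀ E', IsEdgeOf (convexHull ℝ (V : Set (Fin n → ℝ))) E' → v ∈ E' →
      ∃ i, E' = Ed i)
    (hdet : IsUnit (Matrix.det (Matrix.of d))) :
    ∀ x ∈ convexHull ℝ (V : Set (Fin n → ℝ)), ∀ k, 0 ≤ dotR (dualB d k) (x - v) := by
  intro x hx k
  by_contra hneg
  push_neg at hneg
  set u' := -(dualB d k) with hu'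
  have himp : ∃ p ∈ V, dotR u' v < dotR u' p := by
    obtain ⟨p, hp, hxp⟩ := exists_le_on_V V u' hx
    refine ⟨p, hp, lt_of_lt_of_le ?_ hxp⟩
    have : dotR u' (x - v) > 0 := by
      rw [hu', dotR_neg_left]
      linarith
    rw [dotR_sub_right] at this
    linarith
  obtain ⟨E', z, hE', hvE', hzE', hz⟩ := exists_improving_edge V u' hv himp
  obtain ⟨i, hi⟩ := hEdall E' hE' hvE'
  rw [hi] at hvE' hzE'
  obtain ⟨t, ht0, hzv⟩ := edge_point_ray (hEd i).1 hv (hEd i).2.1 (hEd i).2.2 z hzE'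
  have hcontr : dotR u' z - dotR u' v ≤ 0 := by
    rw [← dotR_sub_right, hzv, dotR_smul_right, hu', dotR_neg_left, dualB_pair hdet]
    split_ifs with h
    · nlinarith
    · simp
  linarith

/-- The dual description of a facet normal at a smooth vertex: it is minus one of the
dual-basis vectors. -/
lemma facet_normal_dual
    (hv : IsVertexOf (convexHull ℝ (V : Set (Fin n → ℝ))) v)
    (hEd : ∀ i, IsEdgeOf (convexHull ℝ (V : Set (Fin n → ℝ))) (Ed i) ∧ v ∈ Ed i ∧
      EdgeDirAt v (Ed i) (d i))
    (hEdall : ∀ E', IsEdgeOf (convexHull ℝ (V : Set (Fin n → ℝ))) E' → v ∈ E' →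
      ∃ i, E' = Ed i)
    (hdet : IsUnit (Matrix.det (Matrix.of d)))
    {G : Set (Fin n → ℝ)} {vn : Fin n → ℤ}
    (hGn : IsFacetNormal (convexHull ℝ (V : Set (Fin n → ℝ))) G vn) (hvG : v ∈ G) :
    ∃ k0 : Fin n, ∀ j, intDot vn (d j) = if j = k0 then -1 else 0 := by
  classical
  obtain ⟨hprim, hfacet, hGmax⟩ := hGn
  set P := convexHull ℝ (V : Set (Fin n → ℝ)) with hP
  have hvP : v ∈ P := (Set.ext_iff.1 hGmax v).1 hvG |>.1
  have hvmax : ∀ y ∈ P, dotZ vn y ≤ dotZ vn v := ((Set.ext_iff.1 hGmax v).1 hvG).2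
  set c := fun j => intDot vn (d j) with hc
  -- each coordinate is nonpositive
  have hc_le : ∀ j, c j ≤ 0 := by
    intro j
    obtain ⟨c', hseg', hc'v, r, hr, hc'⟩ := edge_ray (hEd j).1 hv (hEd j).2.1 (hEd j).2.2
    have hc'P : c' ∈ P := by
      have hsub : Ed j ⊆ P := by
        obtain ⟨⟨g0, hg0⟩, _⟩ := (hEd j).1
        rw [hg0]; exact fun x hx => hx.1
      exact hsub (hseg' ▸ right_mem_segment ℝ v c')
    have h1 : dotZ vn c' - dotZ vn v ≤ 0 := by
      linarith [hvmax c' hc'P]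
    rw [dotZ_eq_dotR_castZ, dotZ_eq_dotR_castZ, ← dotR_sub_right, hc', dotR_smul_right,
      dotR_castZ] at h1
    have : (c j : ℝ) ≤ 0 := by
      by_contra hpos
      push_neg at hpos
      nlinarith
    exact_mod_cast this
  -- reconstruction of vn from its dual coordinates
  letI := (Matrix.of d).invertibleOfIsUnitDet hdet
  set B := ⅟(Matrix.of d) with hB
  have hrec : ∀ i, vn i = ∑ j, B i j * c j := by
    have hmv : (Matrix.of d).mulVec vn = c := by
      funext k
      rw [Matrix.mulVec, dotProduct]
      rw [hc]
      simp only [intDot]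
      apply Finset.sum_congr rfl
      intro i _
      rw [Matrix.of_apply]
      ring
    have h2 : B.mulVec ((Matrix.of d).mulVec vn) = vn := by
      rw [Matrix.mulVec_mulVec, invOf_mul_self, Matrix.one_mulVec]
    rw [hmv] at h2
    intro i
    conv_lhs => rw [← h2]
    rw [Matrix.mulVec, dotProduct]
  -- not all coordinates vanish
  have hex : ∃ j, c j ≠ 0 := by
    by_contra hall
    push_neg at hall
    apply primitive_ne_zero hprim
    funext i
    rw [hrec i]
    simp [hall]
  -- at most one coordinate is nonzero, by the dimension argument
  set Zf := Finset.univ.filter (fun j => c j = 0) with hZf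
  set W := Submodule.span ℝ ((Zf.image (fun j => castZ (d j)) : Finset (Fin n → ℝ)) :
    Set (Fin n → ℝ)) with hW
  have hxW : ∀ x ∈ G, x - v ∈ W := by
    intro x hxG
    have hxP : x ∈ P := ((Set.ext_iff.1 hGmax x).1 hxG).1
    have hxmax : ∀ y ∈ P, dotZ vn y ≤ dotZ vn x := ((Set.ext_iff.1 hGmax x).1 hxG).2
    have hzero : dotR (castZ vn) (x - v) = 0 := by
      rw [dotR_sub_right, ← dotZ_eq_dotR_castZ, ← dotZ_eq_dotR_castZ]
      have := hvmax x hxP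
      have := hxmax v hvP
      linarith
    set t := fun k => dotR (dualB d k) (x - v) with ht
    have ht0 : ∀ k, 0 ≤ t k := fun k => tangent_cone V Ed d hv hEd hEdall hdet x hxP k
    have hexp : x - v = ∑ k, t k • castZ (d k) := dualB_expand hdet (x - v)
    have hsum0 : ∑ k, t k * (c k : ℝ) = 0 := by
      have h1 : dotR (castZ vn) (x - v) = ∑ k, t k * (c k : ℝ) := by
        conv_lhs => rw [hexp]
        rw [dotR_sum_smul]
        apply Finset.sum_congr rfl
        intro k _
        rw [dotR_castZ]
      rw [← h1, hzero]
    have hterm : ∀ k ∈ Finset.univ, t k * (c k : ℝ) = 0 := by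
      apply (Finset.sum_eq_zero_iff_of_nonpos ?_).1 hsum0
      intro k _
      have h1 := ht0 k
      have h2 : (c k : ℝ) ≤ 0 := by exact_mod_cast hc_le k
      nlinarith
    rw [hexp]
    apply Submodule.sum_mem
    intro k _
    by_cases hk : c k = 0
    · apply Submodule.smul_mem
      apply Submodule.subset_span
      rw [Finset.coe_image]
      exact Set.mem_image_of_mem _ (by
        rw [hZf]; exact Finset.mem_coe.2 (Finset.mem_filter.2 ⟨Finset.mem_univ k, hk⟩))
    · have htk : t k = 0 := by
        have h1 := hterm k (Finset.mem_univ k)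
        have h2 : (c k : ℝ) ≠ 0 := by exact_mod_cast hk
        rcases mul_eq_zero.1 h1 with h | h
        · exact h
        · exact absurd h h2
      rw [htk, zero_smul]
      exact Submodule.zero_mem W
  have hvsle : vectorSpan ℝ G ≤ W := by
    rw [vectorSpan_def]
    apply Submodule.span_le.2
    rintro z hz
    obtain ⟨x, hx, y, hy, rfl⟩ := Set.mem_vsub.1 hz
    have : x -ᵥ y = (x - v) - (y - v) := by
      rw [vsub_eq_sub]; abel
    rw [this]
    exact Submodule.sub_mem W (hxW x hx) (hxW y hy)
  have hdimG : dimSet G + 1 = n := hfacet.2.2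
  have hfinW : Module.finrank ℝ W ≤ Zf.card := by
    refine le_trans (finrank_span_finset_le_card _) ?_
    exact Finset.card_image_le
  have hZfcard : n - 1 ≤ Zf.card := by
    have h1 : Module.finrank ℝ (vectorSpan ℝ G) ≤ Module.finrank ℝ W :=
      Submodule.finrank_mono hvsle
    have h2 : Module.finrank ℝ (vectorSpan ℝ G) = n - 1 := by
      rw [dimSet] at hdimG
      omega
    omega
  set Nf := Finset.univ.filter (fun j => ¬ c j = 0) with hNf
  have hcards : Zf.card + Nf.card = n := by
    rw [hZf, hNf]
    rw [Finset.card_filter_add_card_filter_not]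
    simp
  have hNfne : Nf.Nonempty := by
    obtain ⟨j, hj⟩ := hex
    exact ⟨j, Finset.mem_filter.2 ⟨Finset.mem_univ j, hj⟩⟩
  have hNf1 : Nf.card = 1 := by
    have := Finset.card_pos.2 hNfne
    omega
  obtain ⟨k0, hk0⟩ := Finset.card_eq_one.1 hNf1
  have hck0 : c k0 ≠ 0 := by
    have : k0 ∈ Nf := by rw [hk0]; exact Finset.mem_singleton_self k0
    exact (Finset.mem_filter.1 this).2
  have hczero : ∀ j, j ≠ k0 → c j = 0 := by
    intro j hj
    by_contra h
    have : j ∈ Nf := Finset.mem_filter.2 ⟨Finset.mem_univ j, h⟩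
    rw [hk0, Finset.mem_singleton] at this
    exact hj this
  -- c k0 = -1
  have hcm1 : c k0 = -1 := by
    have hdvd : ∀ i, c k0 ∣ vn i := by
      intro i
      rw [hrec i]
      rw [Finset.sum_eq_single k0]
      · exact Dvd.intro_left _ rfl
      · intro j _ hj
        rw [hczero j hj, mul_zero]
      · intro h; exact absurd (Finset.mem_univ k0) h
    have : c k0 ∣ Finset.univ.gcd vn := Finset.dvd_gcd (fun i _ => hdvd i)
    have hprim' : Finset.univ.gcd vn = 1 := hprim
    rw [hprim'] at this
    rcases Int.isUnit_iff.1 (isUnit_of_dvd_one this) with h | h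
    · exfalso
      have := hc_le k0
      omega
    · exact h
  refine ⟨k0, fun j => ?_⟩
  by_cases hj : j = k0
  · rw [hj, if_pos rfl]; exact hcm1
  · rw [if_neg hj]; exact hczero j hj

/-- A normal vector is determined by its dual coordinates. -/
lemma normal_determined {d : Fin n → Fin n → ℤ}
    (hdet : IsUnit (Matrix.det (Matrix.of d))) {vn1 vn2 : Fin n → ℤ}
    (h : ∀ j, intDot vn1 (d j) = intDot vn2 (d j)) : vn1 = vn2 := by
  letI := (Matrix.of d).invertibleOfIsUnitDet hdet
  have hrec : ∀ (vn : Fin n → ℤ), ∀ i, vn i = ∑ j, (⅟(Matrix.of d)) i j * intDot vn (d j) := by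
    intro vn i
    have hmv : (Matrix.of d).mulVec vn = fun j => intDot vn (d j) := by
      funext k
      rw [Matrix.mulVec, dotProduct]
      simp only [intDot]
      apply Finset.sum_congr rfl
      intro i' _
      rw [Matrix.of_apply]
      ring
    have h2 : (⅟(Matrix.of d)).mulVec ((Matrix.of d).mulVec vn) = vn := by
      rw [Matrix.mulVec_mulVec, invOf_mul_self, Matrix.one_mulVec]
    rw [hmv] at h2
    conv_lhs => rw [← h2]
    rw [Matrix.mulVec, dotProduct]
  funext i
  rw [hrec vn1 i, hrec vn2 i]
  apply Finset.sum_congr rfl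
  intro j _
  rw [h j]


/-- Expansion of a dot product along the dual basis. -/
lemma dot_expand {d : Fin n → Fin n → ℤ} (hdet : IsUnit (Matrix.det (Matrix.of d)))
    (g z : Fin n → ℝ) :
    dotR g z = ∑ k, dotR (dualB d k) z * dotR g (castZ (d k)) := by
  conv_lhs => rw [dualB_expand hdet z]
  rw [dotR_sum_smul]

/-- The linear map given by a dot product. -/
def dotL (g : Fin n → ℝ) : (Fin n → ℝ) →ₗ[ℝ] ℝ where
  toFun x := dotR g x
  map_add' x y := dotR_add_right g x y
  map_smul' t x := dotR_smul_right g t x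

/-- The "co-facet" associated with an edge direction at a smooth vertex: the face
cut out by minus the corresponding dual basis functional is a facet containing all
the other edges. -/
lemma coFacet
    (hv : IsVertexOf (convexHull ℝ (V : Set (Fin n → ℝ))) v)
    (hEd : ∀ i, IsEdgeOf (convexHull ℝ (V : Set (Fin n → ℝ))) (Ed i) ∧ v ∈ Ed i ∧
      EdgeDirAt v (Ed i) (d i))
    (hEdall : ∀ E', IsEdgeOf (convexHull ℝ (V : Set (Fin n → ℝ))) E' → v ∈ E' →
      ∃ i, E' = Ed i)
    (hdet : IsUnit (Matrix.det (Matrix.of d)))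
    (k0 : Fin n) :
    IsFacetOf (convexHull ℝ (V : Set (Fin n → ℝ)))
      (faceSet (convexHull ℝ (V : Set (Fin n → ℝ))) (-(dualB d k0))) ∧
    v ∈ faceSet (convexHull ℝ (V : Set (Fin n → ℝ))) (-(dualB d k0)) ∧
    (∀ j, j ≠ k0 → Ed j ⊆ faceSet (convexHull ℝ (V : Set (Fin n → ℝ))) (-(dualB d k0))) := by
  set P := convexHull ℝ (V : Set (Fin n → ℝ)) with hP
  set f := dualB d k0 with hf
  have hvP : v ∈ P := subset_convexHull ℝ _ (vertex_mem_V V hv)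
  have hTC := tangent_cone V Ed d hv hEd hEdall hdet
  have hvH : v ∈ faceSet P (-f) := by
    refine ⟨hvP, fun y hy => ?_⟩
    rw [dotR_neg_left, dotR_neg_left]
    have := hTC y hy k0
    rw [dotR_sub_right] at this
    linarith
  have hEdj : ∀ j, j ≠ k0 → Ed j ⊆ faceSet P (-f) := by
    intro j hj z hz
    have hzP : z ∈ P := by
      obtain ⟨⟨g0, hg0⟩, _⟩ := (hEd j).1
      rw [hg0] at hz; exact hz.1
    obtain ⟨t, ht0, hzv⟩ := edge_point_ray (hEd j).1 hv (hEd j).2.1 (hEd j).2.2 z hz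
    have hfz : dotR f z = dotR f v := by
      have : dotR f (z - v) = 0 := by
        rw [hzv, dotR_smul_right, hf, dualB_pair hdet, if_neg hj, mul_zero]
      rw [dotR_sub_right] at this
      linarith
    refine ⟨hzP, fun y hy => ?_⟩
    rw [dotR_neg_left, dotR_neg_left, hfz]
    have := hTC y hy k0
    rw [dotR_sub_right] at this
    linarith
  refine ⟨⟨isFaceOf_faceSet P (-f), ⟨v, hvH⟩, ?_⟩, hvH, hEdj⟩
  -- dimension count
  have hnpos : 0 < n := k0.pos
  have hupper : vectorSpan ℝ (faceSet P (-f)) ≤ LinearMap.ker (dotL f) := by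
    rw [vectorSpan_def]
    apply Submodule.span_le.2
    rintro z hz
    obtain ⟨x, hx, y, hy, rfl⟩ := Set.mem_vsub.1 hz
    have h1 : dotR (-f) x ≤ dotR (-f) y := hy.2 x hx.1
    have h2 : dotR (-f) y ≤ dotR (-f) x := hx.2 y hy.1
    have : dotR f x = dotR f y := by
      rw [dotR_neg_left, dotR_neg_left] at h1 h2
      linarith
    rw [SetLike.mem_coe, LinearMap.mem_ker]
    show dotR f (x -ᵥ y) = 0
    rw [vsub_eq_sub, dotR_sub_right, this, sub_self]
  have hker : Module.finrank ℝ (LinearMap.ker (dotL f)) + 1 = n := by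
    have hsurj : Function.Surjective (dotL f) := by
      intro r
      refine ⟨r • castZ (d k0), ?_⟩
      show dotR f (r • castZ (d k0)) = r
      rw [dotR_smul_right, hf, dualB_pair hdet, if_pos rfl, mul_one]
    have hrange : LinearMap.range (dotL f) = ⊤ := LinearMap.range_eq_top.2 hsurj
    have h1 := LinearMap.finrank_range_add_finrank_ker (dotL f)
    rw [hrange] at h1
    rw [finrank_top ℝ ℝ] at h1
    rw [Module.finrank_self] at h1
    rw [Module.finrank_fintype_fun_eq_card, Fintype.card_fin] at h1
    omega
  have hle1 : Module.finrank ℝ (vectorSpan ℝ (faceSet P (-f))) ≤ n - 1 := by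
    have := Submodule.finrank_mono hupper
    omega
  -- lower bound
  have hlower : n - 1 ≤ Module.finrank ℝ (vectorSpan ℝ (faceSet P (-f))) := by
    set fam : {j : Fin n // j ≠ k0} → (Fin n → ℝ) := fun j => castZ (d j.1) with hfam
    have hindep : LinearIndependent ℝ fam :=
      (dualB_linearIndependent hdet).comp Subtype.val Subtype.val_injective
    have hspan : Submodule.span ℝ (Set.range fam) ≤ vectorSpan ℝ (faceSet P (-f)) := by
      apply Submodule.span_le.2
      rintro z ⟨⟨j, hj⟩, rfl⟩
      obtain ⟨c', hseg', hc'v, r, hr, hc'⟩ := edge_ray (hEd j).1 hv (hEd j).2.1 (hEd j).2.2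
      have hc'H : c' ∈ faceSet P (-f) :=
        hEdj j hj (hseg' ▸ right_mem_segment ℝ v c')
      have hmem : c' -ᵥ v ∈ vectorSpan ℝ (faceSet P (-f)) :=
        vsub_mem_vectorSpan ℝ hc'H hvH
      have : fam ⟨j, hj⟩ = (1 / r) • (c' -ᵥ v) := by
        rw [vsub_eq_sub, hc', smul_smul, one_div, inv_mul_cancel₀ (ne_of_gt hr), one_smul]
      rw [SetLike.mem_coe, this]
      exact Submodule.smul_mem _ _ hmem
    have hcardfam : Fintype.card {j : Fin n // j ≠ k0} = n - 1 := by
      rw [Fintype.card_subtype_compl, Fintype.card_subtype_eq, Fintype.card_fin]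
    have h1 : Module.finrank ℝ (Submodule.span ℝ (Set.range fam)) = n - 1 := by
      rw [finrank_span_eq_card hindep, hcardfam]
    have h2 := Submodule.finrank_mono hspan
    omega
  rw [dimSet]
  omega

/-- Points of `P` lying on all the facets through a face lie on the face. -/
lemma inter_facets_subset_face
    (hv : IsVertexOf (convexHull ℝ (V : Set (Fin n → ℝ))) v)
    (hEd : ∀ i, IsEdgeOf (convexHull ℝ (V : Set (Fin n → ℝ))) (Ed i) ∧ v ∈ Ed i ∧
      EdgeDirAt v (Ed i) (d i))
    (hEdall : ∀ E', IsEdgeOf (convexHull ℝ (V : Set (Fin n → ℝ))) E' → v ∈ E' →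
      ∃ i, E' = Ed i)
    (hdet : IsUnit (Matrix.det (Matrix.of d)))
    (wF : Fin n → ℝ)
    (hvF : v ∈ faceSet (convexHull ℝ (V : Set (Fin n → ℝ))) wF)
    {m : ℕ} {Fs : Fin m → Set (Fin n → ℝ)} {us : Fin m → Fin n → ℤ}
    (hFs : ∀ i, faceSet (convexHull ℝ (V : Set (Fin n → ℝ))) wF ⊆ Fs i ∧
      IsFacetNormal (convexHull ℝ (V : Set (Fin n → ℝ))) (Fs i) (us i))
    (hFscomplete : ∀ G, IsFacetOf (convexHull ℝ (V : Set (Fin n → ℝ))) G →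
      faceSet (convexHull ℝ (V : Set (Fin n → ℝ))) wF ⊆ G → ∃ i, G = Fs i)
    {x : Fin n → ℝ} (hx : x ∈ convexHull ℝ (V : Set (Fin n → ℝ))) (hxi : ∀ i, x ∈ Fs i) :
    x ∈ faceSet (convexHull ℝ (V : Set (Fin n → ℝ))) wF := by
  classical
  set P := convexHull ℝ (V : Set (Fin n → ℝ)) with hP
  have hvP : v ∈ P := hvF.1
  have hTC := tangent_cone V Ed d hv hEd hEdall hdet
  -- slots of the facets through F
  have hslots : ∀ i : Fin m, ∃ ki : Fin n, ∀ j,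
      intDot (us i) (d j) = if j = ki then -1 else 0 := fun i =>
    facet_normal_dual V Ed d hv hEd hEdall hdet (hFs i).2 ((hFs i).1 hvF)
  choose ki hki using hslots
  -- facet values agree between x and v
  have hfacet_eq : ∀ i, dotR (castZ (us i)) (x - v) = 0 := by
    intro i
    obtain ⟨_, _, hGmax⟩ := (hFs i).2
    have hxmax := ((Set.ext_iff.1 hGmax x).1 (hxi i)).2
    have hvmax := ((Set.ext_iff.1 hGmax v).1 ((hFs i).1 hvF)).2
    rw [dotR_sub_right, ← dotZ_eq_dotR_castZ, ← dotZ_eq_dotR_castZ]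
    have h1 := hxmax v hvP
    have h2 := hvmax x hx
    linarith
  set t := fun k => dotR (dualB d k) (x - v) with ht
  have ht0 : ∀ k, 0 ≤ t k := fun k => hTC x hx k
  -- t vanishes on the slots
  have htki : ∀ i, t (ki i) = 0 := by
    intro i
    have h1 := hfacet_eq i
    rw [dot_expand hdet (castZ (us i)) (x - v)] at h1
    have h2 : ∀ k ∈ Finset.univ, dotR (dualB d k) (x - v) * dotR (castZ (us i)) (castZ (d k))
        = if k = ki i then -(t k) else 0 := by
      intro k _
      rw [dotR_castZ, hki i k]
      split_ifs with h
      · push_cast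
        ring
      · push_cast
        ring
    rw [Finset.sum_congr rfl h2] at h1
    rw [Finset.sum_ite_eq' Finset.univ (ki i) (fun k => -(t k))] at h1
    rw [if_pos (Finset.mem_univ _)] at h1
    linarith
  -- functional wF vanishes on the directions outside the slots
  have hwFd : ∀ k, (¬ ∃ i, ki i = k) → dotR wF (castZ (d k)) = 0 := by
    intro k hk
    obtain ⟨hHfacet, hvH, hHedges⟩ := coFacet V Ed d hv hEd hEdall hdet k
    -- F is not contained in H
    have hFnotsub : ¬ (faceSet P wF ⊆ faceSet P (-(dualB d k))) := by
      intro hsub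
      obtain ⟨i, hi⟩ := hFscomplete _ hHfacet hsub
      apply hk
      refine ⟨i, ?_⟩
      -- us i annihilates all directions j ≠ k
      have hzero : ∀ j, j ≠ k → intDot (us i) (d j) = 0 := by
        intro j hj
        obtain ⟨c', hseg', hc'v, r, hr, hc'⟩ := edge_ray (hEd j).1 hv (hEd j).2.1 (hEd j).2.2
        have hc'H : c' ∈ Fs i := by
          rw [← hi]
          exact hHedges j hj (hseg' ▸ right_mem_segment ℝ v c')
        obtain ⟨_, _, hGmax⟩ := (hFs i).2
        have hc'max := ((Set.ext_iff.1 hGmax c').1 hc'H).2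
        have hvmax := ((Set.ext_iff.1 hGmax v).1 ((hFs i).1 hvF)).2
        have hc'P : c' ∈ P := ((Set.ext_iff.1 hGmax c').1 hc'H).1
        have heq : dotR (castZ (us i)) (c' - v) = 0 := by
          rw [dotR_sub_right, ← dotZ_eq_dotR_castZ, ← dotZ_eq_dotR_castZ]
          have h1 := hc'max v hvP
          have h2 := hvmax c' hc'P
          linarith
        rw [hc', dotR_smul_right, dotR_castZ] at heq
        have : (intDot (us i) (d j) : ℝ) = 0 := by
          rcases mul_eq_zero.1 heq with h | h
          · exact absurd h (ne_of_gt hr)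
          · exact h
        exact_mod_cast this
      by_contra hne
      have := hzero (ki i) hne
      rw [hki i (ki i), if_pos rfl] at this
      omega
    -- take a point of F outside H
    have hex : ∃ y, y ∈ faceSet P wF ∧ y ∉ faceSet P (-(dualB d k)) := by
      by_contra h
      push_neg at h
      exact hFnotsub h
    obtain ⟨y, hyF, hyH⟩ := hex
    have hyP : y ∈ P := hyF.1
    set sc := fun j => dotR (dualB d j) (y - v) with hsc
    have hsc0 : ∀ j, 0 ≤ sc j := fun j => hTC y hyP j
    have hsck : 0 < sc k := by
      have h1 : ¬ (∀ z ∈ P, dotR (-(dualB d k)) z ≤ dotR (-(dualB d k)) y) := by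
        intro h2
        exact hyH ⟨hyP, h2⟩
      push_neg at h1
      obtain ⟨z, hzP, hz⟩ := h1
      have h3 : dotR (-(dualB d k)) z ≤ dotR (-(dualB d k)) v := hvH.2 z hzP
      have h4 : dotR (-(dualB d k)) y < dotR (-(dualB d k)) v := lt_of_lt_of_le hz h3
      rw [dotR_neg_left, dotR_neg_left] at h4
      show 0 < dotR (dualB d k) (y - v)
      rw [dotR_sub_right]
      linarith
    have hyv : dotR wF (y - v) = 0 := by
      rw [dotR_sub_right]
      have h1 := hyF.2 v hvP
      have h2 := hvF.2 y hyP
      linarith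
    have hwFd_le : ∀ j, dotR wF (castZ (d j)) ≤ 0 := by
      intro j
      obtain ⟨c', hseg', hc'v, r, hr, hc'⟩ := edge_ray (hEd j).1 hv (hEd j).2.1 (hEd j).2.2
      have hc'P : c' ∈ P := by
        obtain ⟨⟨g0, hg0⟩, _⟩ := (hEd j).1
        have : c' ∈ Ed j := hseg' ▸ right_mem_segment ℝ v c'
        rw [hg0] at this; exact this.1
      have h1 : dotR wF c' ≤ dotR wF v := hvF.2 c' hc'P
      have h2 : dotR wF (c' - v) ≤ 0 := by rw [dotR_sub_right]; linarith
      rw [hc', dotR_smul_right] at h2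
      nlinarith
    have hexpand : dotR wF (y - v) = ∑ j, sc j * dotR wF (castZ (d j)) :=
      dot_expand hdet wF (y - v)
    have hterm : ∀ j ∈ Finset.univ, sc j * dotR wF (castZ (d j)) = 0 := by
      apply (Finset.sum_eq_zero_iff_of_nonpos ?_).1 (by rw [← hexpand, hyv])
      intro j _
      have := hsc0 j
      have := hwFd_le j
      nlinarith
    have h5 := hterm k (Finset.mem_univ k)
    rcases mul_eq_zero.1 h5 with h | h
    · exact absurd h (ne_of_gt hsck)
    · exact h
  -- conclude
  have hxv : dotR wF (x - v) = 0 := by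
    rw [dot_expand hdet wF (x - v)]
    apply Finset.sum_eq_zero
    intro k _
    by_cases hk : ∃ i, ki i = k
    · obtain ⟨i, hi⟩ := hk
      have h0 : dotR (dualB d k) (x - v) = 0 := hi ▸ htki i
      rw [h0, zero_mul]
    · rw [hwFd k hk, mul_zero]
  refine ⟨hx, fun y hy => ?_⟩
  have h1 := hvF.2 y hy
  rw [dotR_sub_right] at hxv
  linarith

end SmoothVertex


section MainAux

variable {n : ℕ}

lemma intDot_sum_left {m : ℕ} (us : Fin m → Fin n → ℤ) (e : Fin n → ℤ) :
    intDot (∑ i, us i) e = ∑ i, intDot (us i) e := by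
  simp only [intDot, Finset.sum_apply, Finset.sum_mul]
  rw [Finset.sum_comm]

end MainAux

/-- Lemma 3.4: in a smooth lattice polytope `P`, with `F` a face
with central normal `u`, supporting value `b = max_{x ∈ P} u·x` and `ε > 0`,
every vertex of `P` not in `F` satisfies `u·v < b - ε` if and only if every
edge with exactly one endpoint in `F` has lattice length strictly greater
than `ε`. -/
theorem blowup_size_iff_edge_lengths {n : ℕ} (P F : Set (Fin n → ℝ))
    (hP : IsLatticePolytope P) (hsm : IsSmoothPolytope P)
    (hF : IsFaceOf P F) (u : Fin n → ℤ) (hu : IsCentralNormal P F u)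
    (b : ℝ) (hb : IsGreatest ((fun x => dotZ u x) '' P) b)
    (ε : ℝ) (hε : 0 < ε) :
    (∀ v, IsVertexOf P v → v ∉ F → dotZ u v < b - ε) ↔
    (∀ a c ℓ, IsVertexOf P a → IsVertexOf P c →
      IsEdgeOf P (segment ℝ a c) → a ∈ F → c ∉ F →
      LatticeLength a c ℓ → ε < (ℓ : ℝ)) := by
  classical
  obtain ⟨V, hVlat, hPV, hPspan⟩ := hP
  subst hPV
  set P := convexHull ℝ (V : Set (Fin n → ℝ)) with hPdef
  obtain ⟨m, Fs, us, hFsinj, hFs, hFscomplete, husum⟩ := hu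
  obtain ⟨wF, hwF⟩ := hF
  have hFface : F = faceSet P wF := hwF
  obtain ⟨x0, hx0P, hx0b⟩ := hb.1
  have hble : ∀ x ∈ P, dotZ u x ≤ b := fun x hx => hb.2 (Set.mem_image_of_mem _ hx)
  have hVne : V.Nonempty := by
    rw [← Finset.coe_nonempty]
    exact (convexHull_nonempty_iff (𝕜 := ℝ)).1 ⟨x0, hx0P⟩
  have hFsubP : F ⊆ P := by
    rw [hFface]; exact fun x hx => hx.1
  have hFsmax : ∀ i (x : Fin n → ℝ), x ∈ Fs i → ∀ y ∈ P, dotZ (us i) y ≤ dotZ (us i) x := by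
    intro i x hx y hy
    obtain ⟨_, _, hGmax⟩ := (hFs i).2
    exact ((Set.ext_iff.1 hGmax x).1 hx).2 y hy
  have hFsP : ∀ i (x : Fin n → ℝ), x ∈ Fs i → x ∈ P := by
    intro i x hx
    obtain ⟨_, _, hGmax⟩ := (hFs i).2
    exact ((Set.ext_iff.1 hGmax x).1 hx).1
  have hFmax : ∀ x ∈ F, ∀ y ∈ P, dotZ u y ≤ dotZ u x := by
    intro x hxF y hyP
    rw [husum, dotZ_sum_left, dotZ_sum_left]
    exact Finset.sum_le_sum fun i _ => hFsmax i x ((hFs i).1 hxF) y hyP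
  have hFb : ∀ x ∈ F, dotZ u x = b := by
    intro x hxF
    apply le_antisymm (hble x (hFsubP hxF))
    rw [← hx0b]
    exact hFmax x hxF x0 hx0P
  constructor
  · -- forward direction
    intro hL a c ℓ ha hc hedge haF hcF hlen
    obtain ⟨dv, hdvprim, hdvlen⟩ := hlen
    have hac : a ≠ c := fun h => hcF (h ▸ haF)
    have hl0 : ℓ ≠ 0 := by
      intro h
      apply hac
      funext i
      have h1 := hdvlen i
      rw [h] at h1
      push_cast at h1
      linarith
    have hlpos : (0 : ℝ) < (ℓ : ℝ) := by
      exact_mod_cast Nat.pos_of_ne_zero hl0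
    have hca : c - a = (ℓ : ℝ) • castZ dv := by
      funext i
      rw [Pi.smul_apply, Pi.sub_apply, smul_eq_mul]
      exact hdvlen i
    obtain ⟨_, Ed, dd, hEdinj, hEd, hEdall, hdet⟩ := hsm a ha
    obtain ⟨k0, hk0⟩ := hEdall (segment ℝ a c) hedge (left_mem_segment ℝ a c)
    obtain ⟨c', hseg', hc'v, r, hr, hc'⟩ := edge_ray (hEd k0).1 ha (hEd k0).2.1 (hEd k0).2.2
    -- identify the edge direction
    have hsegs : segment ℝ a c = segment ℝ a c' := hk0.trans hseg'
    have hcseg : c ∈ segment ℝ a c' := hsegs ▸ right_mem_segment ℝ a c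
    obtain ⟨θ, hθ0, hθ1, hcθ⟩ := segment_param hcseg
    have hcv : c - a = (θ * r) • castZ (dd k0) := by
      rw [hcθ]
      have h1 : a + θ • (c' - a) - a = θ • (c' - a) := by abel
      rw [h1, hc', smul_smul]
    have hθpos : 0 < θ := by
      rcases lt_or_eq_of_le hθ0 with h | h
      · exact h
      exfalso
      apply hac
      rw [hcθ, ← h, zero_smul, add_zero]
    have hdveq : dv = dd k0 := by
      apply primitive_eq_of_proportional hdvprim (hEd k0).2.2.1 hlpos
        (mul_pos hθpos hr)
      intro i
      have h1 := congrFun hca i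
      have h2 := congrFun hcv i
      rw [Pi.smul_apply, Pi.sub_apply, smul_eq_mul] at h1 h2
      simp only [castZ] at h1 h2
      rw [← h1, ← h2]
    -- slots
    have hslots : ∀ i : Fin m, ∃ ki : Fin n, ∀ j,
        intDot (us i) (dd j) = if j = ki then -1 else 0 := fun i =>
      facet_normal_dual V Ed dd ha hEd hEdall hdet (hFs i).2 ((hFs i).1 haF)
    choose ki hki using hslots
    have hki_inj : Function.Injective ki := by
      intro i1 i2 h
      have husz : us i1 = us i2 :=
        normal_determined hdet (fun j => by rw [hki i1 j, hki i2 j, h])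
      apply hFsinj
      rw [(hFs i1).2.2.2, (hFs i2).2.2.2, husz]
    have hterm : ∀ i, intDot (us i) (dd k0) = if ki i = k0 then -1 else 0 := by
      intro i
      rw [hki i k0]
      by_cases h : k0 = ki i
      · rw [if_pos h, if_pos h.symm]
      · rw [if_neg h, if_neg (fun h' => h h'.symm)]
    have hsum : intDot u dv = ∑ i, intDot (us i) (dd k0) := by
      rw [hdveq, husum, intDot_sum_left]
    have hcardle : (Finset.univ.filter (fun i => ki i = k0)).card ≤ 1 := by
      apply Finset.card_le_one.2
      intro i1 h1 i2 h2
      apply hki_inj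
      rw [(Finset.mem_filter.1 h1).2, (Finset.mem_filter.1 h2).2]
    have hge : -1 ≤ intDot u dv := by
      rw [hsum, Finset.sum_congr rfl (fun i _ => hterm i), Finset.sum_ite,
        Finset.sum_const, Finset.sum_const_zero, add_zero]
      have : ((Finset.univ.filter (fun i => ki i = k0)).card : ℤ) ≤ 1 := by
        exact_mod_cast hcardle
      rw [nsmul_eq_mul]
      omega
    have hcast : dotZ u c - dotZ u a = (ℓ : ℝ) * (intDot u dv : ℝ) := by
      rw [dotZ_eq_dotR_castZ, dotZ_eq_dotR_castZ, ← dotR_sub_right, hca, dotR_smul_right,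
        dotR_castZ]
    have h1 : dotZ u c < b - ε := hL c hc hcF
    have h2 : dotZ u a = b := hFb a haF
    have hneg : (ℓ : ℝ) * (intDot u dv : ℝ) < -ε := by
      rw [← hcast]; linarith
    have hint_neg : intDot u dv < 0 := by
      by_contra h
      push_neg at h
      have h3 : (0 : ℝ) ≤ (intDot u dv : ℝ) := by exact_mod_cast h
      nlinarith
    have hint : intDot u dv = -1 := by omega
    rw [hint] at hneg
    push_cast at hneg
    linarith
  · -- reverse direction
    intro hR v0 hv0 hv0F
    set T := V.filter (fun q => IsVertexOf P q ∧ q ∉ F) with hT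
    have hv0V : v0 ∈ V := vertex_mem_V V hv0
    have hv0T : v0 ∈ T := Finset.mem_filter.2 ⟨hv0V, hv0, hv0F⟩
    obtain ⟨vs, hvsT, hvsmax⟩ := T.exists_max_image (fun q => dotZ u q) ⟨v0, hv0T⟩
    obtain ⟨hvsV, hvs, hvsF⟩ := Finset.mem_filter.1 hvsT
    suffices hlt : dotZ u vs < b - ε by
      exact lt_of_le_of_lt (hvsmax v0 hv0T) hlt
    have hvsP : vs ∈ P := subset_convexHull ℝ _ hvsV
    obtain ⟨q, hqvert, hqF⟩ := exists_vertex_in_faceSet V wF hVne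
    have hqFmem : q ∈ F := by rw [hFface]; exact hqF
    obtain ⟨_, Edq, ddq, _, hEdq, hEdallq, hdetq⟩ := hsm q hqvert
    -- Step A : dotZ u vs < b
    have hvsb : dotZ u vs < b := by
      rcases lt_or_eq_of_le (hble vs hvsP) with h | h
      · exact h
      exfalso
      have hqb : dotZ u q = b := hFb q hqFmem
      have hsums : ∑ i, dotZ (us i) vs = ∑ i, dotZ (us i) q := by
        rw [← dotZ_sum_left, ← dotZ_sum_left, ← husum, h, hqb]
      have hle : ∀ i ∈ Finset.univ, dotZ (us i) vs ≤ dotZ (us i) q :=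
        fun i _ => hFsmax i q ((hFs i).1 hqFmem) vs hvsP
      have hsplit : ∀ i ∈ Finset.univ, dotZ (us i) vs = dotZ (us i) q :=
        (Finset.sum_eq_sum_iff_of_le hle).1 hsums
      have hvsFs : ∀ i, vs ∈ Fs i := by
        intro i
        rw [(hFs i).2.2.2]
        refine ⟨hvsP, fun y hy => ?_⟩
        rw [hsplit i (Finset.mem_univ i)]
        exact hFsmax i q ((hFs i).1 hqFmem) y hy
      have hvsFmem := inter_facets_subset_face V Edq ddq hqvert hEdq hEdallq hdetq wF hqF
        (fun i => by rw [← hFface]; exact hFs i)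
        (fun G hG hsub => by rw [← hFface] at hsub; exact hFscomplete G hG hsub)
        hvsP hvsFs
      apply hvsF
      rw [hFface]
      exact hvsFmem
    -- Step B : improving edge at vs
    have himp : ∃ p ∈ V, dotR (castZ u) vs < dotR (castZ u) p := by
      obtain ⟨p, hpV, hp⟩ := exists_le_on_V V (castZ u) hx0P
      refine ⟨p, hpV, ?_⟩
      simp only [← dotZ_eq_dotR_castZ] at hp ⊢
      have hx0b' : dotZ u x0 = b := hx0b
      rw [hx0b'] at hp
      linarith
    obtain ⟨E', z, hE', hvsE', hzE', hz⟩ := exists_improving_edge V (castZ u) hvs himp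
    obtain ⟨⟨gE, hgE⟩, aE, bE, habE, hEseg⟩ := hE'
    have hEsub : E' ⊆ P := by rw [hgE]; exact fun x hx => hx.1
    have haEP : aE ∈ P := hEsub (hEseg ▸ left_mem_segment ℝ aE bE)
    have hbEP : bE ∈ P := hEsub (hEseg ▸ right_mem_segment ℝ aE bE)
    have hvsend : vs = aE ∨ vs = bE :=
      vertex_on_segment hvs haEP hbEP habE (hEseg ▸ hvsE')
    obtain ⟨c', hseg', hc'vs⟩ : ∃ c', E' = segment ℝ vs c' ∧ c' ≠ vs := by
      rcases hvsend with hh | hh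
      · refine ⟨bE, by rw [hEseg, hh], ?_⟩
        intro h2; exact habE (hh ▸ h2.symm)
      · refine ⟨aE, by rw [hEseg, hh, segment_symm], ?_⟩
        intro h2; exact habE (hh ▸ h2)
    have hfaceE : faceSet P gE = segment ℝ vs c' := hgE.symm.trans hseg'
    have hfaceE' : faceSet P gE = segment ℝ c' vs := hfaceE.trans (segment_symm ℝ vs c')
    have hc'vert : IsVertexOf P c' := edge_endpoint_vertex V hc'vs hfaceE'
    -- dotZ u c' > dotZ u vs
    have hc'gt : dotZ u vs < dotZ u c' := by
      obtain ⟨θ, hθ0, hθ1, hzθ⟩ := segment_param (hseg' ▸ hzE')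
      rw [← dotZ_eq_dotR_castZ, ← dotZ_eq_dotR_castZ] at hz
      have h1 : dotZ u z = dotZ u vs + θ * (dotZ u c' - dotZ u vs) := by
        rw [hzθ, dotZ_eq_dotR_castZ, dotZ_eq_dotR_castZ, dotZ_eq_dotR_castZ, dotR_segment]
      nlinarith
    have hc'F : c' ∈ F := by
      by_contra hc'nF
      have hc'T : c' ∈ T :=
        Finset.mem_filter.2 ⟨vertex_mem_V V hc'vert, hc'vert, hc'nF⟩
      have := hvsmax c' hc'T
      linarith
    -- lattice points and the lattice length
    have hvslat : IsLatticePt vs := hVlat vs hvsV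
    have hc'lat : IsLatticePt c' := hVlat c' (vertex_mem_V V hc'vert)
    choose mv hmv using hvslat
    choose mc hmc using hc'lat
    set ev : Fin n → ℤ := fun i => mv i - mc i with hev
    have hevval : ∀ i, vs i - c' i = (ev i : ℝ) := by
      intro i
      rw [hev]
      push_cast
      rw [← hmv i, ← hmc i]
    have hevne : ∃ i, ev i ≠ 0 := by
      by_contra h0
      push_neg at h0
      apply hc'vs
      funext i
      have := hevval i
      rw [h0 i] at this
      push_cast at this
      linarith
    obtain ⟨i0, hi0⟩ := hevne
    set g := Finset.univ.gcd ev with hg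
    have hgne : g ≠ 0 := by
      intro h
      exact hi0 (Finset.gcd_eq_zero_iff.1 h i0 (Finset.mem_univ i0))
    have hgnonneg : 0 ≤ g := Int.nonneg_of_normalize_eq_self Finset.normalize_gcd
    have hgpos : 0 < g := lt_of_le_of_ne hgnonneg (Ne.symm hgne)
    set dv : Fin n → ℤ := fun i => ev i / g with hdv
    have hdvprim : IsPrimitiveZ dv := Finset.gcd_div_eq_one (Finset.mem_univ i0) hi0
    have hgdvd : ∀ i, ev i = g * dv i := fun i =>
      (Int.mul_ediv_cancel' (Finset.gcd_dvd (Finset.mem_univ i))).symm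
    set ℓ : ℕ := g.toNat with hℓ
    have hgℓ : (ℓ : ℤ) = g := Int.toNat_of_nonneg hgnonneg
    have hℓlen : LatticeLength c' vs ℓ := by
      refine ⟨dv, hdvprim, fun i => ?_⟩
      rw [hevval i, hgdvd i]
      push_cast [hgℓ]
      rw [← hgℓ]
      push_cast
      ring
    -- apply the hypothesis
    have hedge' : IsEdgeOf P (segment ℝ c' vs) := by
      refine ⟨⟨gE, ?_⟩, c', vs, hc'vs, rfl⟩
      exact hfaceE'.symm
    have hεℓ := hR c' vs ℓ hc'vert hvs hedge' hc'F hvsF hℓlen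
    -- conclude
    have hc'b : dotZ u c' = b := hFb c' hc'F
    have hdiff : dotZ u vs - dotZ u c' = (ℓ : ℝ) * (intDot u dv : ℝ) := by
      rw [dotZ_eq_dotR_castZ, dotZ_eq_dotR_castZ, ← dotR_sub_right]
      have hvc : vs - c' = (ℓ : ℝ) • castZ dv := by
        funext i
        rw [Pi.smul_apply, Pi.sub_apply, smul_eq_mul]
        rw [hevval i, hgdvd i]
        simp only [castZ]
        push_cast [← hgℓ]
        ring
      rw [hvc, dotR_smul_right, dotR_castZ]
    have hℓpos : (0 : ℝ) < (ℓ : ℝ) := by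
      have : (0 : ℤ) < (ℓ : ℤ) := by omega
      exact_mod_cast this
    have hint_neg : intDot u dv < 0 := by
      by_contra h
      push_neg at h
      have h3 : (0 : ℝ) ≤ (intDot u dv : ℝ) := by exact_mod_cast h
      nlinarith
    have hint : (intDot u dv : ℝ) ≤ -1 := by
      have : intDot u dv ≤ -1 := by omega
      exact_mod_cast this
    have : dotZ u vs ≤ b - (ℓ : ℝ) := by nlinarith
    linarith
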